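/- arXiv:1710.01208 — 7 statements merged into one kernel-verified Lean document; each statement's English description precedes it below -/
import Mathlib

section
/- Let L ≥ 1 and p_1,…,p_L be fixed, and let G = G(p_L). Then for every degree distribution F ∈ F(p_L) one has ξ_F ≥ ξ_G; equivalently, g_F(z̃_F) ≤ g_G(z̃_G). -/
open scoped BigOperators

/-- A degree distribution: a sequence of nonnegative probabilities on the positive
integers summing to one, with finite mean and `p 2 ≠ 1`. -/
structure DegreeDist where
  p : ℕ → ℝ
  nonneg : ∀ d, 0 ≤ p d
  zero : p 0 = 0
  psummable : Summable p
  sum_one : ∑' d : ℕ, p d = 1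
  mean_summable : Summable fun d : ℕ => (d : ℝ) * p d
  two_ne_one : p 2 ≠ 1

/-- The mean `μ_F` of a degree distribution. -/
noncomputable def mu (F : DegreeDist) : ℝ := ∑' d : ℕ, (d : ℝ) * F.p d

/-- The probability generating function `g_F`. -/
noncomputable def pgf (F : DegreeDist) (s : ℝ) : ℝ := ∑' d : ℕ, F.p d * s ^ d

/-- The derivative `g_F'` of the probability generating function. -/
noncomputable def pgfD (F : DegreeDist) (s : ℝ) : ℝ := ∑' d : ℕ, (d : ℝ) * F.p d * s ^ (d - 1)

/-- `z` is the smallest `s ∈ [0,1]` with `m * s = g_F'(s)`.  Taking `m = mu F` gives `z̃_F`;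
taking `m = μ` gives `z̃_F^{(μ)}`. -/
def IsSmallestRoot (F : DegreeDist) (m z : ℝ) : Prop :=
  z ∈ Set.Icc (0 : ℝ) 1 ∧ m * z = pgfD F z ∧
    ∀ s ∈ Set.Icc (0 : ℝ) 1, m * s = pgfD F s → z ≤ s

/-- Membership in the class `F(p_L)`: the first `L` probabilities agree with `p`. -/
def MemF (L : ℕ) (p : ℕ → ℝ) (F : DegreeDist) : Prop :=
  ∀ d, 1 ≤ d → d ≤ L → F.p d = p d

/-- The remaining mass `p_{>L} = 1 - ∑_{i=1}^L p_i`. -/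
noncomputable def pGt (L : ℕ) (p : ℕ → ℝ) : ℝ := 1 - ∑ i ∈ Finset.Icc 1 L, p i

/-- The distribution `G = G(p_L)`: all remaining mass at `L+1`. -/
def IsG (L : ℕ) (p : ℕ → ℝ) (G : DegreeDist) : Prop :=
  (∀ d, 1 ≤ d → d ≤ L → G.p d = p d) ∧
  G.p (L + 1) = pGt L p ∧
  ∀ d, L + 1 < d → G.p d = 0

/-- `κ = (μ - ∑_{d=1}^L d p_d) / p_{>L}`. -/
noncomputable def kappa (L : ℕ) (p : ℕ → ℝ) (μ : ℝ) : ℝ :=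
  (μ - ∑ d ∈ Finset.Icc 1 L, (d : ℝ) * p d) / pGt L p

/-- `r_m = (κ - (L+1)) / (m - (L+1))`. -/
noncomputable def rmass (L : ℕ) (κ : ℝ) (m : ℕ) : ℝ :=
  (κ - ((L : ℝ) + 1)) / ((m : ℝ) - ((L : ℝ) + 1))

/-- The distribution `G_m`: mass `(1-r_m) p_{>L}` at `L+1` and `r_m p_{>L}` at `m`. -/
def IsGm (L : ℕ) (p : ℕ → ℝ) (μ : ℝ) (m : ℕ) (Gm : DegreeDist) : Prop :=
  (∀ d, 1 ≤ d → d ≤ L → Gm.p d = p d) ∧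
  Gm.p (L + 1) = (1 - rmass L (kappa L p μ) m) * pGt L p ∧
  Gm.p m = rmass L (kappa L p μ) m * pGt L p ∧
  ∀ d, L + 1 < d → d ≠ m → Gm.p d = 0

/-- The distribution `H = H(μ, p_L)`: remaining mass at `⌊κ⌋` and `⌊κ⌋+1`, preserving mean `μ`. -/
def IsH (L : ℕ) (p : ℕ → ℝ) (μ : ℝ) (H : DegreeDist) : Prop :=
  (∀ d, 1 ≤ d → d ≤ L → H.p d = p d) ∧
  H.p ⌊kappa L p μ⌋₊ = ((⌊kappa L p μ⌋₊ : ℝ) + 1 - kappa L p μ) * pGt L p ∧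
  H.p (⌊kappa L p μ⌋₊ + 1) = (kappa L p μ - (⌊kappa L p μ⌋₊ : ℝ)) * pGt L p ∧
  ∀ d, L < d → d ≠ ⌊kappa L p μ⌋₊ → d ≠ ⌊kappa L p μ⌋₊ + 1 → H.p d = 0

private lemma core_pow (L : ℕ) (hL : 1 ≤ L) {s : ℝ} (hs0 : 0 ≤ s) (hs1 : s ≤ 1) (i : ℕ) :
    ((i : ℝ) + L + 1) * s ^ (i + L) ≤ (i : ℝ) * s ^ (L - 1) + ((L : ℝ) + 1) * s ^ L := by
  induction i with
  | zero => simp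
  | succ i ih =>
    have h1 : s ^ L ≤ s ^ (L - 1) := pow_le_pow_of_le_one hs0 hs1 (Nat.sub_le L 1)
    have h2 : s ^ (L + 1) ≤ s ^ L := pow_le_pow_of_le_one hs0 hs1 (Nat.le_succ L)
    have h3 : s ^ (i + L + 1) ≤ s ^ (L - 1) := pow_le_pow_of_le_one hs0 hs1 (by omega)
    have eL : s ^ (L - 1) * s = s ^ L := by
      rw [← pow_succ]; congr 1; omega
    have eL2 : s ^ L * s = s ^ (L + 1) := by rw [← pow_succ]
    have hmul := mul_le_mul_of_nonneg_right ih hs0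
    have hi : (0:ℝ) ≤ (i:ℝ) := Nat.cast_nonneg i
    have hLc : (0:ℝ) ≤ (L:ℝ) + 1 := by positivity
    have e0 : s ^ (i + L) * s = s ^ (i + L + 1) := by rw [← pow_succ]
    push_cast
    calc ((i : ℝ) + 1 + L + 1) * s ^ (i + 1 + L)
        = ((i : ℝ) + L + 1) * (s ^ (i + L) * s) + s ^ (i + L + 1) := by
          rw [e0]; rw [show i + 1 + L = i + L + 1 from by omega]; ring
      _ ≤ ((i : ℝ) * s ^ (L - 1) + ((L : ℝ) + 1) * s ^ L) * s + s ^ (L - 1) := by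
          nlinarith [hmul]
      _ = (i : ℝ) * (s ^ (L - 1) * s) + ((L : ℝ) + 1) * (s ^ L * s) + s ^ (L - 1) := by ring
      _ = (i : ℝ) * s ^ L + ((L : ℝ) + 1) * s ^ (L + 1) + s ^ (L - 1) := by rw [eL, eL2]
      _ ≤ ((i : ℝ) + 1) * s ^ (L - 1) + ((L : ℝ) + 1) * s ^ L := by
          nlinarith [mul_le_mul_of_nonneg_left h1 hi, mul_le_mul_of_nonneg_left h2 hLc]

private lemma dd_summable_pgf (F : DegreeDist) {s : ℝ} (hs0 : 0 ≤ s) (hs1 : s ≤ 1) :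
    Summable (fun d : ℕ => F.p d * s ^ d) :=
  Summable.of_nonneg_of_le (fun d => mul_nonneg (F.nonneg d) (pow_nonneg hs0 d))
    (fun d => mul_le_of_le_one_right (F.nonneg d) (pow_le_one₀ hs0 hs1)) F.psummable

private lemma dd_summable_pgfD (F : DegreeDist) {s : ℝ} (hs0 : 0 ≤ s) (hs1 : s ≤ 1) :
    Summable (fun d : ℕ => (d : ℝ) * F.p d * s ^ (d - 1)) :=
  Summable.of_nonneg_of_le
    (fun d => mul_nonneg (mul_nonneg (Nat.cast_nonneg d) (F.nonneg d)) (pow_nonneg hs0 _))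
    (fun d => mul_le_of_le_one_right (mul_nonneg (Nat.cast_nonneg d) (F.nonneg d))
      (pow_le_one₀ hs0 hs1)) F.mean_summable

private lemma dd_pgf_mono (F : DegreeDist) {s t : ℝ} (hs0 : 0 ≤ s) (hst : s ≤ t) (ht1 : t ≤ 1) :
    pgf F s ≤ pgf F t :=
  Summable.tsum_le_tsum
    (fun d => mul_le_mul_of_nonneg_left (pow_le_pow_left₀ hs0 hst d) (F.nonneg d))
    (dd_summable_pgf F hs0 (hst.trans ht1)) (dd_summable_pgf F (hs0.trans hst) ht1)

private lemma dd_pgfD_contOn (F : DegreeDist) :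
    ContinuousOn (fun s : ℝ => pgfD F s) (Set.Icc (0:ℝ) 1) := by
  rw [continuousOn_iff_continuous_restrict]
  apply continuous_tsum (u := fun d : ℕ => (d : ℝ) * F.p d)
    (f := fun (d : ℕ) (x : (Set.Icc (0:ℝ) 1)) => (d : ℝ) * F.p d * (x : ℝ) ^ (d - 1))
  · intro d
    exact continuous_const.mul ((continuous_subtype_val).pow (d - 1))
  · exact F.mean_summable
  · intro d x
    have hx0 : (0:ℝ) ≤ (x:ℝ) := x.2.1
    have hx1 : (x:ℝ) ≤ 1 := x.2.2
    rw [Real.norm_eq_abs, abs_of_nonneg (mul_nonneg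
      (mul_nonneg (Nat.cast_nonneg d) (F.nonneg d)) (pow_nonneg hx0 _))]
    exact mul_le_of_le_one_right (mul_nonneg (Nat.cast_nonneg d) (F.nonneg d))
      (pow_le_one₀ hx0 hx1)

private lemma dd_pgfD_zero (F : DegreeDist) : pgfD F 0 = F.p 1 := by
  unfold pgfD
  rw [tsum_eq_single 1 ?_]
  · simp
  · intro b hb
    match b with
    | 0 => simp
    | n + 2 => simp [zero_pow]

-- tail functions
private lemma split_sum_one (F : DegreeDist) (L : ℕ) :
    ∑ d ∈ Finset.range (L+1), F.p d + ∑' i : ℕ, F.p (i + (L+1)) = 1 := by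
  rw [Summable.sum_add_tsum_nat_add (L+1) F.psummable, F.sum_one]

private lemma split_mu (F : DegreeDist) (L : ℕ) :
    mu F = ∑ d ∈ Finset.range (L+1), ((d : ℝ) * F.p d)
      + ∑' i : ℕ, ((i + (L+1) : ℕ) : ℝ) * F.p (i + (L+1)) := by
  rw [mu, ← Summable.sum_add_tsum_nat_add (L+1) F.mean_summable]

private lemma split_pgfD (F : DegreeDist) (L : ℕ) {s : ℝ} (hs0 : 0 ≤ s) (hs1 : s ≤ 1) :
    pgfD F s = ∑ d ∈ Finset.range (L+1), ((d : ℝ) * F.p d * s ^ (d - 1))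
      + ∑' i : ℕ, ((i + (L+1) : ℕ) : ℝ) * F.p (i + (L+1)) * s ^ (i + L) := by
  rw [pgfD, ← Summable.sum_add_tsum_nat_add (L+1) (dd_summable_pgfD F hs0 hs1)]
  rfl

private lemma split_pgf (F : DegreeDist) (L : ℕ) {s : ℝ} (hs0 : 0 ≤ s) (hs1 : s ≤ 1) :
    pgf F s = ∑ d ∈ Finset.range (L+1), (F.p d * s ^ d)
      + ∑' i : ℕ, F.p (i + (L+1)) * s ^ (i + (L+1)) := by
  rw [pgf, ← Summable.sum_add_tsum_nat_add (L+1) (dd_summable_pgf F hs0 hs1)]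


/-- For every `F ∈ F(p_L)`, `ξ_F ≥ ξ_G`, i.e. `g_F(z̃_F) ≤ g_G(z̃_G)`. -/
theorem tail_does_not_determine_giant_stmt0
    (L : ℕ) (hL : 1 ≤ L) (p : ℕ → ℝ)
    (hp : ∀ i, 0 ≤ p i) (hplt : ∑ i ∈ Finset.Icc 1 L, p i < 1)
    (G : DegreeDist) (hG : IsG L p G)
    (F : DegreeDist) (hF : MemF L p F)
    (zF zG : ℝ)
    (hzF : IsSmallestRoot F (mu F) zF)
    (hzG : IsSmallestRoot G (mu G) zG) :
    1 - pgf G zG ≤ 1 - pgf F zF := by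
  obtain ⟨hzG01, hzGroot, -⟩ := hzG
  obtain ⟨hzF01, -, hzFmin⟩ := hzF
  obtain ⟨hGhead, hGL1, hGtail⟩ := hG
  have hs0 : (0:ℝ) ≤ zG := hzG01.1
  have hs1 : zG ≤ 1 := hzG01.2
  have hhead : ∀ d, d ≤ L → F.p d = G.p d := by
    intro d hd
    match d with
    | 0 => rw [F.zero, G.zero]
    | n + 1 => rw [hF (n+1) (by omega) hd, hGhead (n+1) (by omega) hd]
  set GP := G.p (L+1) with hGPdef
  set S := ∑ d ∈ Finset.range (L+1), F.p d with hSdef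
  set mA := ∑ d ∈ Finset.range (L+1), ((d:ℝ) * F.p d) with hmAdef
  set A := ∑ d ∈ Finset.range (L+1), ((d:ℝ) * F.p d * zG ^ (d-1)) with hAdef
  set tP := ∑' i : ℕ, F.p (i + (L+1)) with htPdef
  set tM := ∑' i : ℕ, ((i + (L+1) : ℕ) : ℝ) * F.p (i + (L+1)) with htMdef
  set tD := ∑' i : ℕ, ((i + (L+1) : ℕ) : ℝ) * F.p (i + (L+1)) * zG ^ (i + L) with htDdef
  -- summability of tails
  have hsP : Summable (fun i : ℕ => F.p (i + (L+1))) :=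
    (summable_nat_add_iff (L+1)).mpr F.psummable
  have hsY : Summable (fun i : ℕ => ((i + (L+1) : ℕ) : ℝ) * F.p (i + (L+1))) :=
    (summable_nat_add_iff (f := fun d : ℕ => (d : ℝ) * F.p d) (L+1)).mpr F.mean_summable
  have hsX : Summable (fun i : ℕ => ((i + (L+1) : ℕ) : ℝ) * F.p (i + (L+1)) * zG ^ (i + L)) := by
    apply Summable.of_nonneg_of_le ?_ ?_ hsY
    · intro i
      exact mul_nonneg (mul_nonneg (Nat.cast_nonneg _) (F.nonneg _)) (pow_nonneg hs0 _)
    · intro i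
      exact mul_le_of_le_one_right (mul_nonneg (Nat.cast_nonneg _) (F.nonneg _))
        (pow_le_one₀ hs0 hs1)
  -- heads agree
  have hheadP : ∑ d ∈ Finset.range (L+1), G.p d = S := by
    refine Finset.sum_congr rfl fun d hd => ?_
    exact (hhead d (by simpa [Nat.lt_succ_iff] using hd)).symm
  have hheadM : ∑ d ∈ Finset.range (L+1), ((d:ℝ) * G.p d) = mA := by
    refine Finset.sum_congr rfl fun d hd => ?_
    rw [hhead d (by simpa [Nat.lt_succ_iff] using hd)]
  have hheadA : ∑ d ∈ Finset.range (L+1), ((d:ℝ) * G.p d * zG ^ (d-1)) = A := by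
    refine Finset.sum_congr rfl fun d hd => ?_
    rw [hhead d (by simpa [Nat.lt_succ_iff] using hd)]
  -- tail of G is a single term
  have hGzero : ∀ i : ℕ, i ≠ 0 → G.p (i + (L+1)) = 0 := fun i hi =>
    hGtail (i + (L+1)) (by omega)
  have e0 : (0 : ℕ) + (L+1) = L+1 := Nat.zero_add _
  have e0' : (0 : ℕ) + L = L := Nat.zero_add _
  have hGtailP : ∑' i : ℕ, G.p (i + (L+1)) = GP := by
    rw [tsum_eq_single 0 (fun i hi => hGzero i hi), e0, hGPdef]
  have hGtailM : ∑' i : ℕ, ((i + (L+1) : ℕ) : ℝ) * G.p (i + (L+1)) = ((L:ℝ)+1) * GP := by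
    rw [tsum_eq_single 0 (fun i hi => by rw [hGzero i hi, mul_zero]), e0, hGPdef]
    push_cast
    ring
  have hGtailD : ∑' i : ℕ, ((i + (L+1) : ℕ) : ℝ) * G.p (i + (L+1)) * zG ^ (i + L)
      = ((L:ℝ)+1) * GP * zG ^ L := by
    rw [tsum_eq_single 0 (fun i hi => by rw [hGzero i hi, mul_zero, zero_mul]), e0, e0', hGPdef]
    push_cast
    ring
  -- splits
  have h1 : mu F = mA + tM := split_mu F L
  have h2 : pgfD F zG = A + tD := split_pgfD F L hs0 hs1
  have h3 : mu G = mA + ((L:ℝ)+1) * GP := by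
    rw [split_mu G L, hheadM, hGtailM]
  have h4 : pgfD G zG = A + ((L:ℝ)+1) * GP * zG ^ L := by
    rw [split_pgfD G L hs0 hs1, hheadA, hGtailD]
  have h5 : tP = GP := by
    have hA := split_sum_one F L
    have hB := split_sum_one G L
    rw [hheadP] at hB
    rw [hGtailP] at hB
    rw [← hSdef, ← htPdef] at hA
    linarith
  -- positivity facts
  have hmA0 : 0 ≤ mA := Finset.sum_nonneg fun d _ =>
    mul_nonneg (Nat.cast_nonneg d) (F.nonneg d)
  have hA0 : 0 ≤ A := Finset.sum_nonneg fun d _ =>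
    mul_nonneg (mul_nonneg (Nat.cast_nonneg d) (F.nonneg d)) (pow_nonneg hs0 _)
  have hGP0 : 0 ≤ GP := G.nonneg _
  have hSp : S = ∑ i ∈ Finset.Icc 1 L, p i := by
    have hins : Finset.range (L+1) = insert 0 (Finset.Icc 1 L) := by
      ext x; simp [Nat.lt_succ_iff]; omega
    rw [hSdef, hins, Finset.sum_insert (by simp), F.zero, zero_add]
    exact Finset.sum_congr rfl fun d hd =>
      hF d (Finset.mem_Icc.mp hd).1 (Finset.mem_Icc.mp hd).2
  have hGPpos : 0 < GP := by
    have hB := split_sum_one G L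
    rw [hheadP, hGtailP] at hB
    rw [hSp] at hB
    linarith
  have hmuGpos : 0 < mu G := by
    have : (0:ℝ) < ((L:ℝ)+1) * GP := by positivity
    rw [h3]; linarith
  -- A dominates mA * zG^(L-1)
  have h6 : mA * zG ^ (L-1) ≤ A := by
    rw [hmAdef, Finset.sum_mul, hAdef]
    refine Finset.sum_le_sum fun d hd => ?_
    have hdL : d ≤ L := by simpa [Nat.lt_succ_iff] using hd
    refine mul_le_mul_of_nonneg_left ?_ (mul_nonneg (Nat.cast_nonneg d) (F.nonneg d))
    exact pow_le_pow_of_le_one hs0 hs1 (by omega)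
  clear_value GP S mA A tP tM tD
  -- the per-index inequality
  have key_i : ∀ i : ℕ,
      mA * (((i + (L+1) : ℕ) : ℝ) * F.p (i + (L+1)) * zG ^ (i + L))
        + (((L:ℝ)+1) * A) * F.p (i + (L+1))
        + (((L:ℝ)+1) * GP) * (((i + (L+1) : ℕ) : ℝ) * F.p (i + (L+1)) * zG ^ (i + L))
      ≤ (mA * (((L:ℝ)+1) * zG ^ L)) * F.p (i + (L+1))
        + A * (((i + (L+1) : ℕ) : ℝ) * F.p (i + (L+1)))
        + ((((L:ℝ)+1) * GP) * zG ^ L) * (((i + (L+1) : ℕ) : ℝ) * F.p (i + (L+1))) := by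
    intro i
    have hc := core_pow L hL hs0 hs1 i
    have hfP0 : 0 ≤ F.p (i + (L+1)) := F.nonneg _
    have hpow : zG ^ (i + L) ≤ zG ^ L := pow_le_pow_of_le_one hs0 hs1 (by omega)
    have hi0 : (0:ℝ) ≤ (i:ℝ) := Nat.cast_nonneg i
    have hL1 : (0:ℝ) ≤ (L:ℝ) + 1 := by positivity
    have t1 := mul_le_mul_of_nonneg_right (mul_le_mul_of_nonneg_left hc hmA0) hfP0
    have t2 := mul_le_mul_of_nonneg_left hpow
      (mul_nonneg (mul_nonneg (mul_nonneg hL1 hGP0)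
        (by positivity : (0:ℝ) ≤ (i:ℝ) + L + 1)) hfP0)
    have t3 := mul_le_mul_of_nonneg_left h6 (mul_nonneg hi0 hfP0)
    push_cast
    linarith [t1, t2, t3]
  -- sum up
  have hsL : Summable (fun i : ℕ =>
      mA * (((i + (L+1) : ℕ) : ℝ) * F.p (i + (L+1)) * zG ^ (i + L))
        + (((L:ℝ)+1) * A) * F.p (i + (L+1))
        + (((L:ℝ)+1) * GP) * (((i + (L+1) : ℕ) : ℝ) * F.p (i + (L+1)) * zG ^ (i + L))) :=
    ((hsX.mul_left mA).add (hsP.mul_left _)).add (hsX.mul_left _)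
  have hsR : Summable (fun i : ℕ =>
      (mA * (((L:ℝ)+1) * zG ^ L)) * F.p (i + (L+1))
        + A * (((i + (L+1) : ℕ) : ℝ) * F.p (i + (L+1)))
        + ((((L:ℝ)+1) * GP) * zG ^ L) * (((i + (L+1) : ℕ) : ℝ) * F.p (i + (L+1)))) :=
    ((hsP.mul_left _).add (hsY.mul_left _)).add (hsY.mul_left _)
  have hsum_le := Summable.tsum_le_tsum key_i hsL hsR
  have hLeq : (∑' i : ℕ,
      (mA * (((i + (L+1) : ℕ) : ℝ) * F.p (i + (L+1)) * zG ^ (i + L))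
        + (((L:ℝ)+1) * A) * F.p (i + (L+1))
        + (((L:ℝ)+1) * GP) * (((i + (L+1) : ℕ) : ℝ) * F.p (i + (L+1)) * zG ^ (i + L))))
      = mA * tD + (((L:ℝ)+1) * A) * tP + (((L:ℝ)+1) * GP) * tD := by
    rw [Summable.tsum_add ((hsX.mul_left mA).add (hsP.mul_left _)) (hsX.mul_left _),
      Summable.tsum_add (hsX.mul_left mA) (hsP.mul_left _), tsum_mul_left, tsum_mul_left,
      tsum_mul_left, ← htDdef, ← htPdef]
  have hReq : (∑' i : ℕ,
      ((mA * (((L:ℝ)+1) * zG ^ L)) * F.p (i + (L+1))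
        + A * (((i + (L+1) : ℕ) : ℝ) * F.p (i + (L+1)))
        + ((((L:ℝ)+1) * GP) * zG ^ L) * (((i + (L+1) : ℕ) : ℝ) * F.p (i + (L+1)))))
      = (mA * (((L:ℝ)+1) * zG ^ L)) * tP + A * tM + ((((L:ℝ)+1) * GP) * zG ^ L) * tM := by
    rw [Summable.tsum_add ((hsP.mul_left _).add (hsY.mul_left _)) (hsY.mul_left _),
      Summable.tsum_add (hsP.mul_left _) (hsY.mul_left _), tsum_mul_left, tsum_mul_left,
      tsum_mul_left, ← htPdef, ← htMdef]
  rw [hLeq, hReq, h5] at hsum_le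
  -- the key comparison of pgf derivatives
  have KEY : mu G * pgfD F zG ≤ mu F * pgfD G zG := by
    rw [h1, h2, h3, h4]
    linarith [hsum_le]
  -- hence pgfD F zG ≤ mu F * zG
  have hkey2 : pgfD F zG ≤ mu F * zG := by
    rw [← hzGroot] at KEY
    have : mu G * pgfD F zG ≤ mu G * (mu F * zG) := KEY.trans_eq (by ring)
    exact le_of_mul_le_mul_left this hmuGpos
  -- intermediate value theorem: zF ≤ zG
  have hzFzG : zF ≤ zG := by
    have hcont : ContinuousOn (fun x : ℝ => mu F * x - pgfD F x) (Set.Icc 0 zG) := by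
      apply ContinuousOn.sub
      · exact (continuous_const.mul continuous_id).continuousOn
      · exact (dd_pgfD_contOn F).mono (Set.Icc_subset_Icc le_rfl hs1)
    have hφ0 : mu F * 0 - pgfD F 0 ≤ 0 := by
      rw [dd_pgfD_zero F, mul_zero, zero_sub, neg_nonpos]
      exact F.nonneg 1
    have hφz : (0:ℝ) ≤ mu F * zG - pgfD F zG := by linarith
    have hsub := intermediate_value_Icc hs0 hcont
    obtain ⟨x, hx, hxeq⟩ := hsub ⟨hφ0, hφz⟩
    have hroot : mu F * x = pgfD F x := by
      have : mu F * x - pgfD F x = 0 := hxeq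
      linarith
    exact (hzFmin x ⟨hx.1, hx.2.trans hs1⟩ hroot).trans hx.2
  -- pgf F zG ≤ pgf G zG
  have hsQ : Summable (fun i : ℕ => F.p (i + (L+1)) * zG ^ (i + (L+1))) := by
    apply Summable.of_nonneg_of_le ?_ ?_ hsP
    · intro i; exact mul_nonneg (F.nonneg _) (pow_nonneg hs0 _)
    · intro i; exact mul_le_of_le_one_right (F.nonneg _) (pow_le_one₀ hs0 hs1)
  have hFG : pgf F zG ≤ pgf G zG := by
    rw [split_pgf F L hs0 hs1, split_pgf G L hs0 hs1]
    have hheadQ : ∑ d ∈ Finset.range (L+1), (G.p d * zG ^ d)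
        = ∑ d ∈ Finset.range (L+1), (F.p d * zG ^ d) := by
      refine Finset.sum_congr rfl fun d hd => ?_
      rw [hhead d (by simpa [Nat.lt_succ_iff] using hd)]
    have hGtailQ : ∑' i : ℕ, G.p (i + (L+1)) * zG ^ (i + (L+1)) = GP * zG ^ (L+1) := by
      rw [tsum_eq_single 0 (fun i hi => by rw [hGzero i hi, zero_mul]), e0, hGPdef]
    have hFtailQ : ∑' i : ℕ, F.p (i + (L+1)) * zG ^ (i + (L+1)) ≤ tP * zG ^ (L+1) := by
      calc ∑' i : ℕ, F.p (i + (L+1)) * zG ^ (i + (L+1))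
          ≤ ∑' i : ℕ, F.p (i + (L+1)) * zG ^ (L+1) := by
            refine Summable.tsum_le_tsum (fun i => ?_) hsQ (hsP.mul_right _)
            exact mul_le_mul_of_nonneg_left
              (pow_le_pow_of_le_one hs0 hs1 (by omega)) (F.nonneg _)
        _ = tP * zG ^ (L+1) := by rw [htPdef]; exact tsum_mul_right
    rw [hheadQ, hGtailQ]
    have := h5 ▸ hFtailQ
    linarith
  have hfinal : pgf F zF ≤ pgf G zG :=
    (dd_pgf_mono F hzF01.1 hzFzG hs1).trans hFG
  linarith
end

section
/- Let L ≥ 1 and p_1,…,p_L be fixed, let G = G(p_L), and let F ∈ F(p_L). Then μ_G ≤ μ_F; for every d with 0 ≤ d ≤ L one has (d+1)·F_{d+1}/μ_F ≤ (d+1)·G_{d+1}/μ_G, and (d+1)·G_{d+1}/μ_G = 0 for d > L; consequently, the down-shifted size-biased distribution of G is stochastically dominated by that of F, i.e., for every integer k ≥ 0, Σ_{d=0}^k (d+1)·G_{d+1}/μ_G ≥ Σ_{d=0}^k (d+1)·F_{d+1}/μ_F. -/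
open scoped BigOperators

private lemma sum_range_eq_Icc' (f : ℕ → ℝ) (h0 : f 0 = 0) (L : ℕ) :
    ∑ i ∈ Finset.range (L+1), f i = ∑ i ∈ Finset.Icc 1 L, f i := by
  induction L with
  | zero => simp [h0]
  | succ n ih => rw [Finset.sum_range_succ, ih, Finset.sum_Icc_succ_top (by omega)]

set_option maxHeartbeats 1000000 in
/-- `μ_G ≤ μ_F`; pointwise comparison of down-shifted size-biased
probabilities up to `L`, vanishing beyond `L` for `G`; and stochastic domination. -/
theorem tail_does_not_determine_giant_stmt2
    (L : ℕ) (hL : 1 ≤ L) (p : ℕ → ℝ)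
    (hp : ∀ i, 0 ≤ p i) (hplt : ∑ i ∈ Finset.Icc 1 L, p i < 1)
    (G : DegreeDist) (hG : IsG L p G)
    (F : DegreeDist) (hF : MemF L p F) :
    mu G ≤ mu F ∧
    (∀ d : ℕ, d ≤ L →
      ((d : ℝ) + 1) * F.p (d + 1) / mu F ≤ ((d : ℝ) + 1) * G.p (d + 1) / mu G) ∧
    (∀ d : ℕ, L < d → ((d : ℝ) + 1) * G.p (d + 1) / mu G = 0) ∧
    ∀ k : ℕ,
      ∑ d ∈ Finset.range (k + 1), ((d : ℝ) + 1) * F.p (d + 1) / mu F ≤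
        ∑ d ∈ Finset.range (k + 1), ((d : ℝ) + 1) * G.p (d + 1) / mu G := by
  obtain ⟨hG1, hG2, hG3⟩ := hG
  set Q := pGt L p with hQdef
  have hQpos : 0 < Q := by rw [hQdef, pGt]; linarith
  have hTsummable : Summable (fun i => F.p (i + (L+1))) :=
    (summable_nat_add_iff (L+1)).2 F.psummable
  have hFrange : ∑ i ∈ Finset.range (L+1), F.p i = ∑ i ∈ Finset.Icc 1 L, p i := by
    rw [sum_range_eq_Icc' _ F.zero]
    exact Finset.sum_congr rfl (fun i hi => by
      simp only [Finset.mem_Icc] at hi; exact hF i hi.1 hi.2)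
  have hT : ∑' i, F.p (i + (L+1)) = Q := by
    have h := F.psummable.sum_add_tsum_nat_add (L+1)
    rw [F.sum_one, hFrange] at h
    rw [hQdef, pGt]; linarith
  have h1 : mu G = ∑ d ∈ Finset.range (L+2), (d:ℝ) * G.p d :=
    tsum_eq_sum (fun d hd => by
      rw [hG3 d (by simp only [Finset.mem_range] at hd; omega)]; ring)
  have hmuG : mu G = ∑ d ∈ Finset.Icc 1 L, (d:ℝ) * p d + ((L:ℝ)+1) * Q := by
    rw [h1, Finset.sum_range_succ,
      sum_range_eq_Icc' (fun d => (d:ℝ) * G.p d) (by simp), hG2]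
    push_cast
    congr 1
    exact Finset.sum_congr rfl (fun i hi => by
      simp only [Finset.mem_Icc] at hi; rw [hG1 i hi.1 hi.2])
  have hsumnn : 0 ≤ ∑ d ∈ Finset.Icc 1 L, (d:ℝ) * p d :=
    Finset.sum_nonneg (fun i _ => mul_nonneg (by positivity) (hp i))
  have hmuGpos : 0 < mu G := by
    have hpos : 0 < ((L:ℝ)+1) * Q := by positivity
    rw [hmuG]; linarith
  have hmeanshift : Summable (fun i : ℕ => ((i + (L+1) : ℕ) : ℝ) * F.p (i + (L+1))) :=
    (summable_nat_add_iff (L+1)).2 F.mean_summable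
  have hmuFsplit : mu F = ∑ i ∈ Finset.range (L+1), (i:ℝ) * F.p i +
      ∑' i : ℕ, ((i + (L+1) : ℕ) : ℝ) * F.p (i + (L+1)) :=
    (F.mean_summable.sum_add_tsum_nat_add (L+1)).symm
  have hfirst : ∑ i ∈ Finset.range (L+1), (i:ℝ) * F.p i
      = ∑ d ∈ Finset.Icc 1 L, (d:ℝ) * p d := by
    rw [sum_range_eq_Icc' _ (by simp)]
    exact Finset.sum_congr rfl (fun i hi => by
      simp only [Finset.mem_Icc] at hi; rw [hF i hi.1 hi.2])
  have htail_ge : ((L:ℝ)+1) * Q ≤ ∑' i : ℕ, ((i + (L+1) : ℕ) : ℝ) * F.p (i + (L+1)) := by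
    rw [← hT, ← tsum_mul_left]
    refine Summable.tsum_le_tsum (fun i => ?_) (hTsummable.mul_left _) hmeanshift
    have h1 : ((L:ℝ)+1) ≤ ((i + (L+1) : ℕ) : ℝ) := by
      push_cast; linarith [Nat.cast_nonneg (α := ℝ) i]
    exact mul_le_mul_of_nonneg_right h1 (F.nonneg _)
  have hmule : mu G ≤ mu F := by rw [hmuG, hmuFsplit, hfirst]; linarith
  have hmuFpos : 0 < mu F := lt_of_lt_of_le hmuGpos hmule
  have hFL1 : F.p (L+1) ≤ Q := by
    rw [← hT]
    simpa using hTsummable.le_tsum 0 (fun j _ => F.nonneg _)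
  have hple : ∀ d : ℕ, d ≤ L → F.p (d+1) ≤ G.p (d+1) := by
    intro d hd
    rcases eq_or_lt_of_le hd with rfl | h
    · rw [hG2]; exact hFL1
    · rw [hF (d+1) (by omega) (by omega), hG1 (d+1) (by omega) (by omega)]
  have part2 : ∀ d : ℕ, d ≤ L →
      ((d:ℝ)+1) * F.p (d+1) / mu F ≤ ((d:ℝ)+1) * G.p (d+1) / mu G := by
    intro d hd
    exact div_le_div₀ (mul_nonneg (by positivity) (G.nonneg _))
      (mul_le_mul_of_nonneg_left (hple d hd) (by positivity)) hmuGpos hmule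
  have part3 : ∀ d : ℕ, L < d → ((d:ℝ)+1) * G.p (d+1) / mu G = 0 := by
    intro d hd; rw [hG3 (d+1) (by omega)]; simp
  refine ⟨hmule, part2, part3, fun k => ?_⟩
  rcases le_or_gt k L with hk | hk
  · exact Finset.sum_le_sum (fun d hd => part2 d
      (by simp only [Finset.mem_range] at hd; omega))
  · have hshift1 : Summable (fun d : ℕ => ((d + 1 : ℕ) : ℝ) * F.p (d+1)) :=
      (summable_nat_add_iff 1).2 F.mean_summable
    have hsummF : Summable (fun d : ℕ => ((d:ℝ)+1) * F.p (d+1)) :=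
      hshift1.congr (fun d => by push_cast; ring)
    have htsumF : ∑' d : ℕ, ((d:ℝ)+1) * F.p (d+1) = mu F := by
      have h := F.mean_summable.tsum_eq_zero_add
      simp only [Nat.cast_zero, zero_mul, zero_add] at h
      rw [mu, h]
      exact (tsum_congr (fun d => by push_cast; ring)).symm
    have hLHS : ∑ d ∈ Finset.range (k+1), ((d:ℝ)+1) * F.p (d+1) / mu F ≤ 1 := by
      rw [← Finset.sum_div, div_le_one hmuFpos, ← htsumF]
      exact Summable.sum_le_tsum _ (fun i _ => mul_nonneg (by positivity) (F.nonneg _)) hsummF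
    have hsub : ∑ d ∈ Finset.range (k+1), ((d:ℝ)+1) * G.p (d+1)
        = ∑ d ∈ Finset.range (L+1), ((d:ℝ)+1) * G.p (d+1) := by
      symm
      refine Finset.sum_subset (Finset.range_subset_range.2 (by omega)) ?_
      intro x hx hx'
      simp only [Finset.mem_range] at hx hx'
      rw [hG3 (x+1) (by omega)]; ring
    have hsum : ∑ d ∈ Finset.range (L+1), ((d:ℝ)+1) * G.p (d+1) = mu G := by
      have h2 := Finset.sum_range_succ' (fun d => (d:ℝ) * G.p d) (L+1)
      rw [h1, h2]
      simp only [Nat.cast_zero, zero_mul, add_zero]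
      exact (Finset.sum_congr rfl (fun i _ => by push_cast; ring)).symm
    have hRHS : ∑ d ∈ Finset.range (k+1), ((d:ℝ)+1) * G.p (d+1) / mu G = 1 := by
      rw [← Finset.sum_div, hsub, hsum, div_self (ne_of_gt hmuGpos)]
    rw [hRHS]; exact hLHS
end

section
/- Let L ≥ 1 and p_1,…,p_L be fixed, and let G = G(p_L). Then for every degree distribution F ∈ F(p_L), z̃_F ≤ z̃_G. -/
open scoped BigOperators

lemma DD.term_nonneg (F : DegreeDist) {s : ℝ} (hs : 0 ≤ s) (d : ℕ) :
    0 ≤ (d : ℝ) * F.p d * s ^ (d - 1) :=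
  mul_nonneg (mul_nonneg (by positivity) (F.nonneg d)) (pow_nonneg hs _)

lemma DD.term_summable (F : DegreeDist) {s : ℝ} (hs : s ∈ Set.Icc (0:ℝ) 1) :
    Summable (fun d : ℕ => (d : ℝ) * F.p d * s ^ (d - 1)) := by
  refine Summable.of_nonneg_of_le (DD.term_nonneg F hs.1) (fun d => ?_) F.mean_summable
  calc (d : ℝ) * F.p d * s ^ (d - 1) ≤ (d : ℝ) * F.p d * 1 := by
        refine mul_le_mul_of_nonneg_left (pow_le_one₀ hs.1 hs.2)
          (mul_nonneg (by positivity) (F.nonneg d))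
    _ = (d : ℝ) * F.p d := mul_one _

lemma DD.pgfD_contOn (F : DegreeDist) : ContinuousOn (pgfD F) (Set.Icc (0:ℝ) 1) := by
  refine continuousOn_tsum (fun d => ?_) F.mean_summable (fun d x hx => ?_)
  · exact Continuous.continuousOn (by continuity)
  · rw [Real.norm_eq_abs, abs_of_nonneg (DD.term_nonneg F hx.1 d)]
    calc (d : ℝ) * F.p d * x ^ (d - 1) ≤ (d : ℝ) * F.p d * 1 :=
        mul_le_mul_of_nonneg_left (pow_le_one₀ hx.1 hx.2)
          (mul_nonneg (by positivity) (F.nonneg d))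
      _ = (d : ℝ) * F.p d := mul_one _

lemma DD.pgfD_nonneg (F : DegreeDist) {s : ℝ} (hs : 0 ≤ s) : 0 ≤ pgfD F s :=
  tsum_nonneg (DD.term_nonneg F hs)

/-- Splitting the derivative pgf into head and tail. -/
lemma DD.pgfD_split (F : DegreeDist) (L : ℕ) {s : ℝ} (hs : s ∈ Set.Icc (0:ℝ) 1) :
    pgfD F s = (∑ i ∈ Finset.range (L + 1), (i : ℝ) * F.p i * s ^ (i - 1)) +
      ∑' n : ℕ, ((n + (L + 1) : ℕ) : ℝ) * F.p (n + (L + 1)) * s ^ (n + L) := by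
  rw [pgfD, ← Summable.sum_add_tsum_nat_add (L + 1) (DD.term_summable F hs)]
  exact congrArg₂ (· + ·) rfl (tsum_congr fun n => rfl)

lemma DD.mu_split (F : DegreeDist) (L : ℕ) :
    mu F = (∑ i ∈ Finset.range (L + 1), (i : ℝ) * F.p i) +
      ∑' n : ℕ, ((n + (L + 1) : ℕ) : ℝ) * F.p (n + (L + 1)) := by
  rw [mu, ← Summable.sum_add_tsum_nat_add (L + 1) F.mean_summable]

lemma DD.tail_mass (F : DegreeDist) (L : ℕ) (p : ℕ → ℝ) (hF : MemF L p F) :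
    ∑' n : ℕ, F.p (n + (L + 1)) = pGt L p := by
  have hsplit := Summable.sum_add_tsum_nat_add (f := F.p) (L + 1) F.psummable
  rw [F.sum_one] at hsplit
  have hhead : ∑ i ∈ Finset.range (L + 1), F.p i = ∑ i ∈ Finset.Icc 1 L, p i := by
    have hsub : Finset.Icc 1 L ⊆ Finset.range (L + 1) := by
      intro i hi
      simp only [Finset.mem_Icc] at hi
      exact Finset.mem_range.2 (by omega)
    have hzero : ∀ x ∈ Finset.range (L + 1), x ∉ Finset.Icc 1 L → F.p x = 0 := by
      intro x hxr hx
      simp only [Finset.mem_Icc, Finset.mem_range, not_and, not_le] at hxr hx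
      have hx0 : x = 0 := by omega
      rw [hx0, F.zero]
    rw [← Finset.sum_subset hsub hzero]
    exact Finset.sum_congr rfl fun i hi => by
      simp only [Finset.mem_Icc] at hi; exact hF i hi.1 hi.2
  rw [hhead] at hsplit
  rw [pGt]; linarith


set_option maxHeartbeats 1000000 in
/-- For every `F ∈ F(p_L)`, `z̃_F ≤ z̃_G`. -/
theorem tail_does_not_determine_giant_stmt3
    (L : ℕ) (hL : 1 ≤ L) (p : ℕ → ℝ)
    (hp : ∀ i, 0 ≤ p i) (hplt : ∑ i ∈ Finset.Icc 1 L, p i < 1)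
    (G : DegreeDist) (hG : IsG L p G)
    (F : DegreeDist) (hF : MemF L p F)
    (zF zG : ℝ)
    (hzF : IsSmallestRoot F (mu F) zF)
    (hzG : IsSmallestRoot G (mu G) zG) :
    zF ≤ zG := by
  obtain ⟨hzG01, hzGroot, _⟩ := hzG
  set s := zG with hsdef
  have hs0 : (0:ℝ) ≤ s := hzG01.1
  have hs1 : s ≤ 1 := hzG01.2
  have hpGt : 0 < pGt L p := by rw [pGt]; linarith
  -- head quantities
  set A : ℝ := ∑ i ∈ Finset.range (L + 1), (i : ℝ) * F.p i * s ^ (i - 1) with hA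
  set a : ℝ := ∑ i ∈ Finset.range (L + 1), (i : ℝ) * F.p i with ha
  set tF : ℝ := ∑' n : ℕ, ((n + (L + 1) : ℕ) : ℝ) * F.p (n + (L + 1)) with htF
  set tG : ℝ := ((L:ℝ) + 1) * pGt L p with htG
  -- agreement of heads between F and G
  have hpFG : ∀ i ∈ Finset.range (L+1), (i:ℝ) * G.p i = (i:ℝ) * F.p i := by
    intro i hi
    rcases Nat.eq_zero_or_pos i with h | h
    · simp [h]
    · rw [hF i h (Nat.lt_succ_iff.mp (Finset.mem_range.1 hi)),
        hG.1 i h (Nat.lt_succ_iff.mp (Finset.mem_range.1 hi))]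
  have hheadEqs : ∑ i ∈ Finset.range (L+1), (i:ℝ) * G.p i * s ^ (i-1) = A := by
    rw [hA]
    exact Finset.sum_congr rfl fun i hi => by rw [hpFG i hi]
  have hheadEq1 : ∑ i ∈ Finset.range (L+1), (i:ℝ) * G.p i = a := by
    rw [ha]
    exact Finset.sum_congr rfl fun i hi => hpFG i hi
  -- tail of G
  have hGtail : ∀ t : ℝ, (∑' n : ℕ, ((n + (L + 1) : ℕ) : ℝ) * G.p (n + (L + 1)) * t ^ (n + L))
      = ((L:ℝ) + 1) * pGt L p * t ^ L := by
    intro t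
    rw [tsum_eq_single 0 (fun n hn => by
      rw [hG.2.2 (n + (L + 1)) (by omega)]; ring)]
    simp [hG.2.1]
  -- pgfD G s
  have hpgfDG : pgfD G s = A + tG * s ^ L := by
    rw [DD.pgfD_split G L ⟨hs0, hs1⟩, hGtail s, hheadEqs, htG]
  -- mu G
  have hmuG : mu G = a + tG := by
    rw [DD.mu_split G L, hheadEq1, tsum_eq_single 0 (fun n hn => by
        rw [hG.2.2 (n + (L + 1)) (by omega)]; ring), htG]
    rw [show 0 + (L + 1) = L + 1 from by omega, hG.2.1]
    push_cast
    ring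
  -- mu F
  have hmuF : mu F = a + tF := DD.mu_split F L
  -- nonnegativity facts
  have hAnn : 0 ≤ A := Finset.sum_nonneg fun i _ => DD.term_nonneg F hs0 i
  have hann : 0 ≤ a := Finset.sum_nonneg fun i _ =>
    mul_nonneg (by positivity) (F.nonneg i)
  have htGpos : 0 < tG := by
    rw [htG]; positivity
  -- summability of shifted series
  have hsumFm : Summable (fun n : ℕ => ((n + (L + 1) : ℕ) : ℝ) * F.p (n + (L + 1))) :=
    (summable_nat_add_iff (L + 1)).2 F.mean_summable
  have hsumFp : Summable (fun n : ℕ => F.p (n + (L + 1))) :=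
    (summable_nat_add_iff (L + 1)).2 F.psummable
  -- tF ≥ tG
  have htFtG : tG ≤ tF := by
    have h1 : ∀ n : ℕ, ((L:ℝ) + 1) * F.p (n + (L + 1)) ≤
        ((n + (L + 1) : ℕ) : ℝ) * F.p (n + (L + 1)) := by
      intro n
      refine mul_le_mul_of_nonneg_right ?_ (F.nonneg _)
      push_cast; linarith [Nat.cast_nonneg (α := ℝ) n]
    have h2 := Summable.tsum_le_tsum h1 (hsumFp.mul_left _) hsumFm
    rw [tsum_mul_left, DD.tail_mass F L p hF] at h2
    exact h2
  -- TF ≤ s^L * tF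
  have hTFle : (∑' n : ℕ, ((n + (L + 1) : ℕ) : ℝ) * F.p (n + (L + 1)) * s ^ (n + L))
      ≤ s ^ L * tF := by
    have h1 : ∀ n : ℕ, ((n + (L + 1) : ℕ) : ℝ) * F.p (n + (L + 1)) * s ^ (n + L)
        ≤ s ^ L * (((n + (L + 1) : ℕ) : ℝ) * F.p (n + (L + 1))) := by
      intro n
      have hnn : 0 ≤ ((n + (L + 1) : ℕ) : ℝ) * F.p (n + (L + 1)) :=
        mul_nonneg (by positivity) (F.nonneg _)
      calc ((n + (L + 1) : ℕ) : ℝ) * F.p (n + (L + 1)) * s ^ (n + L)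
          = (s ^ n * (((n + (L + 1) : ℕ) : ℝ) * F.p (n + (L + 1)))) * s ^ L := by
            rw [pow_add]; ring
        _ ≤ (1 * (((n + (L + 1) : ℕ) : ℝ) * F.p (n + (L + 1)))) * s ^ L := by
            refine mul_le_mul_of_nonneg_right
              (mul_le_mul_of_nonneg_right (pow_le_one₀ hs0 hs1) hnn) (by positivity)
        _ = s ^ L * (((n + (L + 1) : ℕ) : ℝ) * F.p (n + (L + 1))) := by ring
    have hsum2 : Summable (fun n : ℕ => s ^ L * (((n + (L + 1) : ℕ) : ℝ) * F.p (n + (L + 1)))) :=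
      hsumFm.mul_left _
    have hsum1 : Summable (fun n : ℕ => ((n + (L + 1) : ℕ) : ℝ) * F.p (n + (L + 1)) * s ^ (n + L)) :=
      Summable.of_nonneg_of_le (fun n => mul_nonneg (mul_nonneg (by positivity) (F.nonneg _))
        (by positivity)) h1 hsum2
    have h2 := Summable.tsum_le_tsum h1 hsum1 hsum2
    rwa [tsum_mul_left] at h2
  -- A ≥ s^L * a
  have hAge : s ^ L * a ≤ A := by
    rw [ha, hA, Finset.mul_sum]
    refine Finset.sum_le_sum fun i hi => ?_
    rcases Nat.eq_zero_or_pos i with h | h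
    · simp [h]
    · have hle : s ^ L ≤ s ^ (i - 1) :=
        pow_le_pow_of_le_one hs0 hs1 (by
          have := Nat.lt_succ_iff.mp (Finset.mem_range.1 hi); omega)
      calc s ^ L * ((i:ℝ) * F.p i) ≤ s ^ (i-1) * ((i:ℝ) * F.p i) :=
            mul_le_mul_of_nonneg_right hle (mul_nonneg (by positivity) (F.nonneg i))
        _ = (i:ℝ) * F.p i * s ^ (i-1) := by ring
  -- root equation for G
  have hroot : (a + tG) * s = A + tG * s ^ L := by
    rw [← hmuG, hzGroot, hpgfDG]
  -- key inequality : pgfD F s ≤ mu F * s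
  have hkey : pgfD F s ≤ mu F * s := by
    rw [DD.pgfD_split F L ⟨hs0, hs1⟩, ← hA, hmuF]
    have h1 : A + (∑' n : ℕ, ((n + (L + 1) : ℕ) : ℝ) * F.p (n + (L + 1)) * s ^ (n + L))
        ≤ A + s ^ L * tF := by linarith
    refine h1.trans ?_
    have hprod : 0 ≤ (tF - tG) * (A - s ^ L * a) :=
      mul_nonneg (by linarith) (by linarith)
    have hatG : 0 < a + tG := by linarith
    have h2 : (a + tG) * (A + s ^ L * tF) ≤ (a + tG) * ((a + tF) * s) := by
      have expand : (a + tG) * ((a + tF) * s) = (a + tF) * ((a + tG) * s) := by ring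
      rw [expand, hroot]
      nlinarith [hprod]
    exact le_of_mul_le_mul_left h2 hatG
  -- intermediate value theorem
  have hcont : ContinuousOn (fun t => mu F * t - pgfD F t) (Set.Icc 0 s) := by
    refine ContinuousOn.sub ((continuous_const.mul continuous_id).continuousOn) ?_
    exact (DD.pgfD_contOn F).mono (Set.Icc_subset_Icc le_rfl hs1)
  have hf0 : mu F * 0 - pgfD F 0 ≤ 0 := by
    simp only [mul_zero, zero_sub, neg_nonpos]
    exact DD.pgfD_nonneg F le_rfl
  have hfs : 0 ≤ mu F * s - pgfD F s := by linarith
  have hmem : (0:ℝ) ∈ Set.Icc (mu F * 0 - pgfD F 0) (mu F * s - pgfD F s) := ⟨hf0, hfs⟩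
  obtain ⟨z, hz, hfz⟩ := intermediate_value_Icc hs0 hcont hmem
  have hzroot : mu F * z = pgfD F z := by
    have : mu F * z - pgfD F z = 0 := hfz
    linarith
  exact (hzF.2.2 z ⟨hz.1, hz.2.trans hs1⟩ hzroot).trans hz.2
end

section
/- Fix L ≥ 1, probabilities p_1,…,p_L and a mean μ > 0 with κ > L+1, and let G = G(p_L). If z̃_G ≤ e^{−2/(L+1)}, then the equation μ·s = g_G'(s) has a unique solution z̃_G^{(μ)} in [0,1), and z̃_m → z̃_G^{(μ)} as m → ∞. -/
open scoped BigOperators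

lemma pgfD_eq_sum (F : DegreeDist) {N : ℕ} (h : ∀ d, N ≤ d → F.p d = 0) (s : ℝ) :
    pgfD F s = ∑ d ∈ Finset.range N, (d : ℝ) * F.p d * s ^ (d - 1) := by
  refine tsum_eq_sum ?_
  intro d hd
  rw [h d (by simpa using hd)]; ring

lemma pgfD_zero (F : DegreeDist) {N : ℕ} (hN : 2 ≤ N) (h : ∀ d, N ≤ d → F.p d = 0) :
    pgfD F 0 = F.p 1 := by
  rw [pgfD_eq_sum F h]
  rw [Finset.sum_eq_single 1]
  · norm_num
  · intro b _ hb1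
    rcases Nat.eq_zero_or_pos b with rfl | hbpos
    · simp
    · rw [zero_pow (by omega : b - 1 ≠ 0)]; ring
  · intro h1; exact absurd (Finset.mem_range.mpr (by omega)) h1

lemma convexOn_finsum (N : ℕ) (c : ℕ → ℝ) (hc : ∀ d, 0 ≤ c d) :
    ConvexOn ℝ (Set.Icc (0:ℝ) 1) (fun s : ℝ => ∑ d ∈ Finset.range N, c d * s ^ (d - 1)) := by
  induction N with
  | zero => simpa using convexOn_const 0 (convex_Icc (0:ℝ) 1)
  | succ n ih =>
    have hterm : ConvexOn ℝ (Set.Icc (0:ℝ) 1) (fun s : ℝ => c n * s ^ (n - 1)) := by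
      have := ((convexOn_pow (n-1)).smul (hc n)).subset Set.Icc_subset_Ici_self
        (convex_Icc (0:ℝ) 1)
      simpa [smul_eq_mul] using this
    simp only [Finset.sum_range_succ]
    exact ih.add hterm

lemma convex_root_bounds {f : ℝ → ℝ} (hconv : ConvexOn ℝ (Set.Icc (0:ℝ) 1) f)
    {μ z : ℝ} (hz0 : 0 ≤ z) (hz1 : z < 1) (hroot : f z = μ * z) :
    (∀ t, 0 ≤ t → t ≤ z → (μ - f 1) * (z - t) ≤ (f t - μ * t) * (1 - z)) ∧
    (∀ t, z ≤ t → t ≤ 1 → (f t - μ * t) * (1 - z) ≤ -((μ - f 1) * (t - z))) := by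
  constructor
  · intro t ht0 htz
    rcases eq_or_lt_of_le htz with rfl | htz
    · rw [hroot]; simp
    · have ht1 : 0 < 1 - t := by linarith
      have ha : 0 ≤ (1 - z) / (1 - t) := div_nonneg (by linarith) ht1.le
      have hb : 0 ≤ (z - t) / (1 - t) := div_nonneg (by linarith) ht1.le
      have hab : (1 - z) / (1 - t) + (z - t) / (1 - t) = 1 := by field_simp; ring
      have hcomb : ((1 - z) / (1 - t)) • t + ((z - t) / (1 - t)) • (1:ℝ) = z := by
        simp only [smul_eq_mul]; field_simp; ring
      have h := hconv.2 (Set.mem_Icc.mpr ⟨ht0, by linarith⟩)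
        (Set.mem_Icc.mpr ⟨by norm_num, le_refl (1:ℝ)⟩) ha hb hab
      rw [hcomb, hroot] at h
      simp only [smul_eq_mul] at h
      have h2 : μ * z * (1 - t) ≤ (1 - z) * f t + (z - t) * f 1 := by
        have := mul_le_mul_of_nonneg_right h ht1.le
        calc μ * z * (1 - t)
            ≤ ((1 - z) / (1 - t) * f t + (z - t) / (1 - t) * f 1) * (1 - t) := this
          _ = (1 - z) * f t + (z - t) * f 1 := by field_simp
      nlinarith [h2]
  · intro t hzt ht1
    have h1z : 0 < 1 - z := by linarith
    have ha : 0 ≤ (1 - t) / (1 - z) := div_nonneg (by linarith) h1z.le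
    have hb : 0 ≤ (t - z) / (1 - z) := div_nonneg (by linarith) h1z.le
    have hab : (1 - t) / (1 - z) + (t - z) / (1 - z) = 1 := by field_simp; ring
    have hcomb : ((1 - t) / (1 - z)) • z + ((t - z) / (1 - z)) • (1:ℝ) = t := by
      simp only [smul_eq_mul]; field_simp; ring
    have h := hconv.2 (Set.mem_Icc.mpr ⟨hz0, hz1.le⟩)
      (Set.mem_Icc.mpr ⟨by norm_num, le_refl (1:ℝ)⟩) ha hb hab
    rw [hcomb, hroot] at h
    simp only [smul_eq_mul] at h
    have h2 : f t * (1 - z) ≤ (1 - t) * (μ * z) + (t - z) * f 1 := by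
      have := mul_le_mul_of_nonneg_right h h1z.le
      calc f t * (1 - z)
          ≤ ((1 - t) / (1 - z) * (μ * z) + (t - z) / (1 - z) * f 1) * (1 - z) := this
        _ = (1 - t) * (μ * z) + (t - z) * f 1 := by field_simp
    nlinarith [h2]

/-- If `κ > L+1` and `z̃_G ≤ e^{-2/(L+1)}`, then `μ s = g_G'(s)` has a unique
solution `z̃_G^{(μ)}` in `[0,1)`, and `z̃_m → z̃_G^{(μ)}` as `m → ∞`. -/
theorem tail_does_not_determine_giant_stmt10
    (L : ℕ) (hL : 1 ≤ L) (p : ℕ → ℝ)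
    (hp : ∀ i, 0 ≤ p i) (hplt : ∑ i ∈ Finset.Icc 1 L, p i < 1)
    (μ : ℝ) (hμ : 0 < μ) (hκ : (L : ℝ) + 1 < kappa L p μ)
    (G : DegreeDist) (hG : IsG L p G)
    (zG : ℝ) (hzG : IsSmallestRoot G (mu G) zG)
    (hcond : zG ≤ Real.exp (-(2 / ((L : ℝ) + 1))))
    (Gm : ℕ → DegreeDist)
    (hGm : ∀ m : ℕ, kappa L p μ < (m : ℝ) → IsGm L p μ m (Gm m))
    (zm : ℕ → ℝ)
    (hzm : ∀ m : ℕ, kappa L p μ < (m : ℝ) → IsSmallestRoot (Gm m) μ (zm m)) :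
    (∃! zstar : ℝ, zstar ∈ Set.Ico (0 : ℝ) 1 ∧ μ * zstar = pgfD G zstar) ∧
    ∀ zstar : ℝ, zstar ∈ Set.Ico (0 : ℝ) 1 ∧ μ * zstar = pgfD G zstar →
      Filter.Tendsto zm Filter.atTop (nhds zstar) := by
  classical
  obtain ⟨hG1, hG2, hG3⟩ := hG
  have hpgt : 0 < pGt L p := by unfold pGt; linarith
  have hGz : ∀ d, L + 2 ≤ d → G.p d = 0 := fun d hd => hG3 d (by omega)
  have fsum : ∀ s : ℝ, pgfD G s = ∑ d ∈ Finset.range (L+2), (d:ℝ) * G.p d * s ^ (d-1) :=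
    pgfD_eq_sum G hGz
  -- value at 1
  have hf1 : pgfD G 1 = (∑ d ∈ Finset.Icc 1 L, (d:ℝ) * p d) + ((L:ℝ)+1) * pGt L p := by
    rw [fsum 1]
    simp only [one_pow, mul_one]
    rw [Finset.sum_range_succ]
    have hsub : Finset.Icc 1 L ⊆ Finset.range (L+1) := by
      intro x hx; rw [Finset.mem_range]; have := (Finset.mem_Icc.mp hx).2; omega
    have h1 : ∑ d ∈ Finset.range (L+1), (d:ℝ) * G.p d
        = ∑ d ∈ Finset.Icc 1 L, (d:ℝ) * p d := by
      rw [← Finset.sum_subset hsub (by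
        intro x hx hnx
        have hx' := Finset.mem_range.mp hx
        simp only [Finset.mem_Icc, not_and, not_le] at hnx
        have : x = 0 := by omega
        simp [this])]
      exact Finset.sum_congr rfl fun d hd => by
        rw [hG1 d (Finset.mem_Icc.mp hd).1 (Finset.mem_Icc.mp hd).2]
    rw [h1, hG2]
    push_cast
    ring
  have hκ' : ((L:ℝ)+1) * pGt L p < μ - ∑ d ∈ Finset.Icc 1 L, (d:ℝ) * p d := by
    have h := hκ
    rw [kappa] at h
    exact (lt_div_iff₀ hpgt).mp h
  have c0 : 0 < μ - pgfD G 1 := by rw [hf1]; linarith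
  -- convexity and continuity of pgfD G
  have hconv : ConvexOn ℝ (Set.Icc (0:ℝ) 1) (pgfD G) := by
    rw [show pgfD G = fun s : ℝ => ∑ d ∈ Finset.range (L+2), (d:ℝ) * G.p d * s ^ (d-1) from
      funext fsum]
    exact convexOn_finsum _ _ (fun d => mul_nonneg (Nat.cast_nonneg d) (G.nonneg d))
  have hcontG : Continuous fun s : ℝ => pgfD G s - μ * s := by
    rw [show (fun s : ℝ => pgfD G s - μ * s)
        = fun s : ℝ => (∑ d ∈ Finset.range (L+2), (d:ℝ) * G.p d * s ^ (d-1)) - μ * s from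
        funext fun s => by rw [fsum s]]
    exact (continuous_finset_sum _ fun d _ => (continuous_const.mul (continuous_pow _))).sub
      (continuous_const.mul continuous_id)
  have hg1neg : pgfD G 1 - μ * 1 < 0 := by linarith
  have hg0 : 0 ≤ pgfD G 0 - μ * 0 := by
    rw [pgfD_zero G (by omega) hGz]; simpa using G.nonneg 1
  have hexists : ∃ z ∈ Set.Icc (0:ℝ) 1, pgfD G z - μ * z = 0 := by
    have h := intermediate_value_Icc' (by norm_num : (0:ℝ) ≤ 1) hcontG.continuousOn
    have h0 : (0:ℝ) ∈ Set.Icc (pgfD G 1 - μ * 1) (pgfD G 0 - μ * 0) := ⟨hg1neg.le, hg0⟩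
    obtain ⟨z, hz, hz'⟩ := h h0
    exact ⟨z, hz, hz'⟩
  have hlt : ∀ y z' : ℝ, 0 ≤ z' → z' < 1 → μ * z' = pgfD G z' → 0 ≤ y → y < z' →
      μ * y = pgfD G y → False := by
    intro y z' h0 h1 hr h0y hlty hy
    have hA := (convex_root_bounds hconv h0 h1 hr.symm).1 y h0y hlty.le
    rw [← hy] at hA
    nlinarith [mul_pos c0 (show (0:ℝ) < z' - y by linarith)]
  have huniq : ∀ y z' : ℝ, y ∈ Set.Ico (0:ℝ) 1 → z' ∈ Set.Ico (0:ℝ) 1 →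
      μ * y = pgfD G y → μ * z' = pgfD G z' → y = z' := by
    intro y z' hy hz' hry hrz
    rcases lt_trichotomy y z' with h | h | h
    · exact (hlt y z' hz'.1 hz'.2 hrz hy.1 h hry).elim
    · exact h
    · exact (hlt z' y hy.1 hy.2 hry hz'.1 h hrz).elim
  constructor
  · -- existence and uniqueness
    obtain ⟨z, hzmem, hzeq⟩ := hexists
    have hzne : z ≠ 1 := by rintro rfl; linarith
    have hzlt : z < 1 := lt_of_le_of_ne hzmem.2 hzne
    refine ⟨z, ⟨⟨hzmem.1, hzlt⟩, by linarith⟩, ?_⟩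
    intro y hy
    exact huniq y z hy.1 ⟨hzmem.1, hzlt⟩ hy.2 (by linarith)
  · -- convergence
    rintro zstar ⟨⟨hzs0, hzs1⟩, hroot⟩
    have hAB := convex_root_bounds hconv hzs0 hzs1 hroot.symm
    rw [Metric.tendsto_atTop]
    intro ε hε
    set ε' : ℝ := min (ε/2) ((1 - zstar)/2) with hε'def
    have hε'pos : 0 < ε' := lt_min (by linarith) (by linarith)
    have hε'le : ε' ≤ ε/2 := min_le_left _ _
    have hε'le2 : ε' ≤ (1 - zstar)/2 := min_le_right _ _
    set θ : ℝ := zstar + ε' with hθdef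
    have hθ0 : 0 ≤ θ := by rw [hθdef]; linarith
    have hθ1 : θ < 1 := by rw [hθdef]; linarith
    have hδpos : 0 < (μ - pgfD G 1) * ε' := mul_pos c0 hε'pos
    -- limits
    have t2 : Filter.Tendsto (fun m : ℕ => (m:ℝ) * θ ^ (m-1)) Filter.atTop (nhds 0) := by
      have h1 : Filter.Tendsto (fun n : ℕ => ((n:ℝ)+1) * θ ^ n) Filter.atTop (nhds 0) := by
        have := (tendsto_self_mul_const_pow_of_lt_one hθ0 hθ1).add
          (tendsto_pow_atTop_nhds_zero_of_lt_one hθ0 hθ1)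
        simpa [add_mul] using this
      have h2 := h1.comp (Filter.tendsto_sub_atTop_nat 1)
      refine Filter.Tendsto.congr' ?_ h2
      filter_upwards [Filter.eventually_ge_atTop 1] with m hm
      simp only [Function.comp_apply]
      congr 1
      push_cast [Nat.cast_sub hm]
      ring
    have hden : Filter.Tendsto (fun m : ℕ => (m:ℝ) - ((L:ℝ)+1)) Filter.atTop Filter.atTop := by
      simpa [sub_eq_add_neg] using
        Filter.tendsto_atTop_add_const_right Filter.atTop (-((L:ℝ)+1))
          (tendsto_natCast_atTop_atTop (R := ℝ))
    have hBtend : Filter.Tendsto (fun m : ℕ => rmass L (kappa L p μ) m * pGt L p *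
        ((m:ℝ) * θ^(m-1) + ((L:ℝ)+1)) * (1 - zstar)) Filter.atTop (nhds 0) := by
      have heq : (fun m : ℕ => rmass L (kappa L p μ) m * pGt L p *
          ((m:ℝ) * θ^(m-1) + ((L:ℝ)+1)) * (1 - zstar))
          = fun m : ℕ => ((kappa L p μ - ((L:ℝ)+1)) * pGt L p * (1 - zstar)) *
            ((m:ℝ) - ((L:ℝ)+1))⁻¹ * ((m:ℝ) * θ^(m-1) + ((L:ℝ)+1)) := by
        funext m
        rw [rmass, div_eq_mul_inv]
        ring
      rw [heq]
      have := (Filter.Tendsto.mul (tendsto_const_nhds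
        (x := (kappa L p μ - ((L:ℝ)+1)) * pGt L p * (1 - zstar)))
        hden.inv_tendsto_atTop).mul (t2.add (tendsto_const_nhds (x := ((L:ℝ)+1))))
      simpa using this
    have hev1 : ∀ᶠ m : ℕ in Filter.atTop, rmass L (kappa L p μ) m * pGt L p *
        ((m:ℝ) * θ^(m-1) + ((L:ℝ)+1)) * (1 - zstar) < (μ - pgfD G 1) * ε' :=
      hBtend.eventually_lt_const hδpos
    have hev2 : ∀ᶠ m : ℕ in Filter.atTop, kappa L p μ < (m : ℝ) :=
      (tendsto_natCast_atTop_atTop (R := ℝ)).eventually_gt_atTop _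
    obtain ⟨N, hN⟩ := Filter.eventually_atTop.mp (hev1.and hev2)
    refine ⟨N, fun n hn => ?_⟩
    obtain ⟨hBn, hκn⟩ := hN n hn
    obtain ⟨hm1, hm2, hm3, hm4⟩ := hGm n hκn
    obtain ⟨⟨hz0, hz1⟩, hzroot, hzmin⟩ := hzm n hκn
    have hLn : ((L:ℝ)+1) < (n:ℝ) := lt_trans hκ hκn
    have hnL : L + 1 < n := by exact_mod_cast hLn
    have hGmz : ∀ d, n + 1 ≤ d → (Gm n).p d = 0 := fun d hd => hm4 d (by omega) (by omega)
    have hGz' : ∀ d, n + 1 ≤ d → G.p d = 0 := fun d hd => hG3 d (by omega)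
    have hr0 : 0 ≤ rmass L (kappa L p μ) n := by
      rw [rmass]; exact div_nonneg (by linarith) (by linarith)
    have hDm : ∀ s : ℝ, pgfD (Gm n) s - pgfD G s
        = rmass L (kappa L p μ) n * pGt L p * ((n:ℝ) * s^(n-1) - ((L:ℝ)+1) * s^L) := by
      intro s
      rw [pgfD_eq_sum (Gm n) hGmz s, pgfD_eq_sum G hGz' s, ← Finset.sum_sub_distrib]
      have hsub : ({L+1, n} : Finset ℕ) ⊆ Finset.range (n+1) := by
        intro x hx
        simp only [Finset.mem_insert, Finset.mem_singleton] at hx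
        rcases hx with rfl | rfl <;> (rw [Finset.mem_range]; omega)
      rw [← Finset.sum_subset hsub (by
        intro x hx hnx
        simp only [Finset.mem_insert, Finset.mem_singleton, not_or] at hnx
        obtain ⟨hx1, hx2⟩ := hnx
        rcases Nat.lt_or_ge x (L+1) with hxl | hxg
        · rcases Nat.eq_zero_or_pos x with rfl | hxp
          · simp
          · rw [hm1 x hxp (by omega), hG1 x hxp (by omega)]; ring
        · have hgt : L + 1 < x := by omega
          rw [hm4 x hgt hx2, hG3 x hgt]; ring)]
      rw [Finset.sum_pair (by omega : L + 1 ≠ n)]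
      rw [hm2, hm3, hG2, hG3 n hnL]
      simp only [Nat.add_sub_cancel]
      push_cast
      ring
    have hDb : ∀ s : ℝ, 0 ≤ s → s ≤ θ → |pgfD (Gm n) s - pgfD G s|
        ≤ rmass L (kappa L p μ) n * pGt L p * ((n:ℝ) * θ^(n-1) + ((L:ℝ)+1)) := by
      intro s hs0 hsθ
      rw [hDm s, abs_mul, abs_of_nonneg (mul_nonneg hr0 hpgt.le)]
      refine mul_le_mul_of_nonneg_left ?_ (mul_nonneg hr0 hpgt.le)
      have hs1 : s ≤ 1 := le_trans hsθ hθ1.le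
      have e1 : (n:ℝ) * s^(n-1) ≤ (n:ℝ) * θ^(n-1) :=
        mul_le_mul_of_nonneg_left (pow_le_pow_left₀ hs0 hsθ _) (Nat.cast_nonneg n)
      have e2 : ((L:ℝ)+1) * s^L ≤ ((L:ℝ)+1) * 1 :=
        mul_le_mul_of_nonneg_left (pow_le_one₀ hs0 hs1) (by positivity)
      have e3 : (0:ℝ) ≤ (n:ℝ) * s^(n-1) := by positivity
      have e4 : (0:ℝ) ≤ ((L:ℝ)+1) * s^L := by positivity
      calc |(n:ℝ) * s^(n-1) - ((L:ℝ)+1) * s^L|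
          ≤ |(n:ℝ) * s^(n-1)| + |((L:ℝ)+1) * s^L| := abs_sub _ _
        _ = (n:ℝ) * s^(n-1) + ((L:ℝ)+1) * s^L := by
            rw [abs_of_nonneg e3, abs_of_nonneg e4]
        _ ≤ (n:ℝ) * θ^(n-1) + ((L:ℝ)+1) := by linarith
    -- lower bound on zm n
    have hlow : zstar - ε' < zm n := by
      by_contra hcon
      push_neg at hcon
      have hzz : zm n ≤ zstar := by linarith
      have hA := hAB.1 (zm n) hz0 hzz
      have hD := hDb (zm n) hz0 (by rw [hθdef]; linarith)
      have hD' : pgfD G (zm n) - μ * zm n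
          ≤ rmass L (kappa L p μ) n * pGt L p * ((n:ℝ) * θ^(n-1) + ((L:ℝ)+1)) := by
        calc pgfD G (zm n) - μ * zm n
            = -(pgfD (Gm n) (zm n) - pgfD G (zm n)) := by rw [← hzroot]; ring
          _ ≤ |pgfD (Gm n) (zm n) - pgfD G (zm n)| := neg_le_abs _
          _ ≤ _ := hD
      have e1 : (μ - pgfD G 1) * ε' ≤ (μ - pgfD G 1) * (zstar - zm n) :=
        mul_le_mul_of_nonneg_left (by linarith) c0.le
      have e2 : (pgfD G (zm n) - μ * zm n) * (1 - zstar)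
          ≤ rmass L (kappa L p μ) n * pGt L p * ((n:ℝ) * θ^(n-1) + ((L:ℝ)+1)) * (1 - zstar) :=
        mul_le_mul_of_nonneg_right hD' (by linarith)
      linarith [hA, e1, e2, hBn]
    -- upper bound on zm n
    have hup : zm n ≤ θ := by
      have hB := hAB.2 θ (by rw [hθdef]; linarith) hθ1.le
      have hθz : θ - zstar = ε' := by rw [hθdef]; ring
      rw [hθz] at hB
      have hD := hDb θ hθ0 le_rfl
      have hD2 : (pgfD (Gm n) θ - pgfD G θ) * (1 - zstar)
          ≤ rmass L (kappa L p μ) n * pGt L p * ((n:ℝ) * θ^(n-1) + ((L:ℝ)+1)) * (1 - zstar) :=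
        mul_le_mul_of_nonneg_right ((le_abs_self _).trans hD) (by linarith)
      have hneg : pgfD (Gm n) θ - μ * θ < 0 := by
        by_contra hc
        push_neg at hc
        have hnn : 0 ≤ (pgfD (Gm n) θ - μ * θ) * (1 - zstar) :=
          mul_nonneg hc (by linarith)
        have hsplit : (pgfD (Gm n) θ - μ * θ) * (1 - zstar)
            = (pgfD G θ - μ * θ) * (1 - zstar)
              + (pgfD (Gm n) θ - pgfD G θ) * (1 - zstar) := by ring
        linarith [hB, hD2, hBn]
      have hct : Continuous fun s : ℝ => pgfD (Gm n) s - μ * s := by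
        rw [show (fun s : ℝ => pgfD (Gm n) s - μ * s)
            = fun s : ℝ => (∑ d ∈ Finset.range (n+1), (d:ℝ) * (Gm n).p d * s ^ (d-1)) - μ * s
            from funext fun s => by rw [pgfD_eq_sum (Gm n) hGmz s]]
        exact (continuous_finset_sum _ fun d _ =>
          (continuous_const.mul (continuous_pow _))).sub (continuous_const.mul continuous_id)
      have hIVT := intermediate_value_Icc' hθ0 hct.continuousOn
      obtain ⟨s0, hs0mem, hs0⟩ := hIVT (Set.mem_Icc.mpr ⟨hneg.le, by
        rw [pgfD_zero (Gm n) (by omega) hGmz]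
        simp only [mul_zero, sub_zero]
        rw [hm1 1 le_rfl hL]
        exact hp 1⟩)
      have hs0' : pgfD (Gm n) s0 - μ * s0 = 0 := hs0
      have hle : zm n ≤ s0 :=
        hzmin s0 ⟨hs0mem.1, le_trans hs0mem.2 hθ1.le⟩ (by linarith)
      linarith [hs0mem.2]
    rw [Real.dist_eq, abs_lt]
    constructor
    · linarith
    · have : zm n ≤ zstar + ε' := by rw [hθdef] at hup; exact hup
      linarith
end

section
/- Let N be a random variable taking values in the nonnegative integers with finite mean κ, and suppose P(N ≤ ⌊κ⌋) > 0 and P(N > ⌊κ⌋) > 0. Then there exist probability distributions ν_1 and ν_2 on the nonnegative integers, each supported on the support of the law of N, with mean ⌊κ⌋ and ⌊κ⌋+1 respectively, such that the law of N equals the mixture (⌊κ⌋+1−κ)·ν_1 + (κ−⌊κ⌋)·ν_2. -/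
open scoped BigOperators

/-- A distribution `q` on `ℕ` with mean `κ`, charging both `{≤ ⌊κ⌋}` and
`{> ⌊κ⌋}`, is a mixture `(⌊κ⌋+1-κ) ν₁ + (κ-⌊κ⌋) ν₂` of distributions supported on the
support of `q` with means `⌊κ⌋` and `⌊κ⌋+1`. -/
theorem tail_does_not_determine_giant_stmt11
    (q : ℕ → ℝ) (hq : ∀ k, 0 ≤ q k) (hsum : ∑' k : ℕ, q k = 1)
    (hmean : Summable fun k : ℕ => (k : ℝ) * q k)
    (κ : ℝ) (hκ : κ = ∑' k : ℕ, (k : ℝ) * q k)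
    (hlow : ∃ k : ℕ, k ≤ ⌊κ⌋₊ ∧ 0 < q k)
    (hhi : ∃ k : ℕ, ⌊κ⌋₊ < k ∧ 0 < q k) :
    ∃ ν₁ ν₂ : ℕ → ℝ,
      (∀ k, 0 ≤ ν₁ k) ∧ (∑' k : ℕ, ν₁ k) = 1 ∧
      (∀ k, 0 ≤ ν₂ k) ∧ (∑' k : ℕ, ν₂ k) = 1 ∧
      (∀ k, ν₁ k ≠ 0 → q k ≠ 0) ∧ (∀ k, ν₂ k ≠ 0 → q k ≠ 0) ∧
      Summable (fun k : ℕ => (k : ℝ) * ν₁ k) ∧ (∑' k : ℕ, (k : ℝ) * ν₁ k) = (⌊κ⌋₊ : ℝ) ∧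
      Summable (fun k : ℕ => (k : ℝ) * ν₂ k) ∧ (∑' k : ℕ, (k : ℝ) * ν₂ k) = (⌊κ⌋₊ : ℝ) + 1 ∧
      ∀ k, q k = ((⌊κ⌋₊ : ℝ) + 1 - κ) * ν₁ k + (κ - (⌊κ⌋₊ : ℝ)) * ν₂ k := by
    classical
  have hqsum : Summable q := by
    by_contra h
    rw [tsum_eq_zero_of_not_summable h] at hsum
    norm_num at hsum
  set F := ⌊κ⌋₊ with hFdef
  have hκ0 : 0 ≤ κ := by
    rw [hκ]; exact tsum_nonneg fun k => mul_nonneg (Nat.cast_nonneg k) (hq k)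
  have hFle : (F : ℝ) ≤ κ := Nat.floor_le hκ0
  have hκlt : κ < (F : ℝ) + 1 := Nat.lt_floor_add_one κ
  obtain ⟨k₀, hk₀F, hk₀⟩ := hlow
  obtain ⟨k₁, hk₁F, hk₁⟩ := hhi
  have hk₁R : (F : ℝ) + 1 ≤ (k₁ : ℝ) := by exact_mod_cast Nat.succ_le_of_lt hk₁F
  rcases eq_or_lt_of_le hFle with hbz | hbpos
  · -- κ = ⌊κ⌋ : take ν₁ = q and ν₂ a two-point distribution
    have hk01 : (0:ℝ) < (k₁ : ℝ) - (k₀ : ℝ) := by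
      have : (k₀ : ℝ) ≤ (F : ℝ) := by exact_mod_cast hk₀F
      linarith
    set w : ℝ := ((F : ℝ) + 1 - (k₀ : ℝ)) / ((k₁ : ℝ) - (k₀ : ℝ)) with hwdef
    have hk₀R : (k₀ : ℝ) ≤ (F : ℝ) := by exact_mod_cast hk₀F
    have hw0 : 0 ≤ w := by
      apply div_nonneg _ hk01.le; linarith
    have hw1 : w ≤ 1 := by
      rw [div_le_one hk01]; linarith
    have hne : k₀ ≠ k₁ := by omega
    refine ⟨q, fun k => (if k = k₁ then w else 0) + (if k = k₀ then 1 - w else 0),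
      hq, hsum, ?_, ?_, fun k h => h, ?_, hmean, ?_, ?_, ?_, ?_⟩
    · intro k
      by_cases h1 : k = k₁ <;> by_cases h2 : k = k₀ <;> simp [h1, h2, hne, Ne.symm hne] <;> linarith
    · have s1 : Summable (fun k : ℕ => if k = k₁ then w else 0) :=
        summable_of_ne_finset_zero (s := {k₁}) (fun k hk => by
          simp only [Finset.mem_singleton] at hk; simp [hk])
      have s2 : Summable (fun k : ℕ => if k = k₀ then 1 - w else 0) :=
        summable_of_ne_finset_zero (s := {k₀}) (fun k hk => by
          simp only [Finset.mem_singleton] at hk; simp [hk])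
      rw [Summable.tsum_add s1 s2, tsum_ite_eq, tsum_ite_eq]; ring
    · intro k h
      by_cases h1 : k = k₁
      · subst h1; exact ne_of_gt hk₁
      by_cases h2 : k = k₀
      · subst h2; exact ne_of_gt hk₀
      · exact absurd (by simp [h1, h2]) h
    · rw [← hκ]; exact hbz.symm
    · have hfun : (fun k : ℕ => (k : ℝ) * ((if k = k₁ then w else 0) + (if k = k₀ then 1 - w else 0)))
          = fun k : ℕ => (if k = k₁ then (k₁ : ℝ) * w else 0) + (if k = k₀ then (k₀ : ℝ) * (1 - w) else 0) := by
        funext k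
        by_cases h1 : k = k₁ <;> by_cases h2 : k = k₀ <;> simp [h1, h2, hne, Ne.symm hne] <;> first | ring | (exfalso; exact hne (h2 ▸ h1 ▸ rfl))
      rw [hfun]
      exact (summable_of_ne_finset_zero (s := {k₁}) (fun k hk => by
          simp only [Finset.mem_singleton] at hk; simp [hk])).add
        (summable_of_ne_finset_zero (s := {k₀}) (fun k hk => by
          simp only [Finset.mem_singleton] at hk; simp [hk]))
    · have hfun : (fun k : ℕ => (k : ℝ) * ((if k = k₁ then w else 0) + (if k = k₀ then 1 - w else 0)))
          = fun k : ℕ => (if k = k₁ then (k₁ : ℝ) * w else 0) + (if k = k₀ then (k₀ : ℝ) * (1 - w) else 0) := by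
        funext k
        by_cases h1 : k = k₁ <;> by_cases h2 : k = k₀ <;> simp [h1, h2, hne, Ne.symm hne] <;> first | ring | (exfalso; exact hne (h2 ▸ h1 ▸ rfl))
      have s1 : Summable (fun k : ℕ => if k = k₁ then (k₁ : ℝ) * w else 0) :=
        summable_of_ne_finset_zero (s := {k₁}) (fun k hk => by
          simp only [Finset.mem_singleton] at hk; simp [hk])
      have s2 : Summable (fun k : ℕ => if k = k₀ then (k₀ : ℝ) * (1 - w) else 0) :=
        summable_of_ne_finset_zero (s := {k₀}) (fun k hk => by
          simp only [Finset.mem_singleton] at hk; simp [hk])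
      rw [hfun, Summable.tsum_add s1 s2, tsum_ite_eq, tsum_ite_eq, hwdef]
      field_simp
      ring
    · intro k
      rw [← hbz]; ring
  · -- ⌊κ⌋ < κ
    set qA : ℕ → ℝ := fun k => if k ≤ F then q k else 0 with hqAdef
    set qB : ℕ → ℝ := fun k => if k ≤ F then 0 else q k with hqBdef
    set gA : ℕ → ℝ := fun k => if k ≤ F then (k : ℝ) * q k else 0 with hgAdef
    set gB : ℕ → ℝ := fun k => if k ≤ F then 0 else (k : ℝ) * q k with hgBdef
    have hqA_sum : Summable qA :=
      summable_of_ne_finset_zero (s := Finset.range (F + 1)) (fun k hk => by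
        simp only [Finset.mem_range, not_lt] at hk
        simp only [hqAdef]; rw [if_neg (by omega)])
    have hgA_sum : Summable gA :=
      summable_of_ne_finset_zero (s := Finset.range (F + 1)) (fun k hk => by
        simp only [Finset.mem_range, not_lt] at hk
        simp only [hgAdef]; rw [if_neg (by omega)])
    set α := ∑ k ∈ Finset.range (F + 1), q k with hαdef
    set mA := ∑ k ∈ Finset.range (F + 1), (k : ℝ) * q k with hmAdef
    have htsum_qA : ∑' k, qA k = α := by
      rw [tsum_eq_sum (s := Finset.range (F + 1)) (fun k hk => by
        simp only [Finset.mem_range, not_lt] at hk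
        simp only [hqAdef]; rw [if_neg (by omega)]), hαdef]
      exact Finset.sum_congr rfl fun k hk => by
        simp only [Finset.mem_range] at hk
        simp only [hqAdef]; rw [if_pos (by omega)]
    have htsum_gA : ∑' k, gA k = mA := by
      rw [tsum_eq_sum (s := Finset.range (F + 1)) (fun k hk => by
        simp only [Finset.mem_range, not_lt] at hk
        simp only [hgAdef]; rw [if_neg (by omega)]), hmAdef]
      exact Finset.sum_congr rfl fun k hk => by
        simp only [Finset.mem_range] at hk
        simp only [hgAdef]; rw [if_pos (by omega)]
    have hqB_eq : qB = fun k => q k - qA k := by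
      funext k; by_cases h : k ≤ F <;> simp [hqAdef, hqBdef, h]
    have hgB_eq : gB = fun k : ℕ => (k : ℝ) * q k - gA k := by
      funext k; by_cases h : k ≤ F <;> simp [hgAdef, hgBdef, h]
    have hqB_sum : Summable qB := by rw [hqB_eq]; exact hqsum.sub hqA_sum
    have hgB_sum : Summable gB := by rw [hgB_eq]; exact hmean.sub hgA_sum
    set β := 1 - α with hβdef
    set mB := κ - mA with hmBdef
    have htsum_qB : ∑' k, qB k = β := by
      rw [hqB_eq, Summable.tsum_sub hqsum hqA_sum, hsum, htsum_qA]
    have htsum_gB : ∑' k, gB k = mB := by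
      rw [hgB_eq, Summable.tsum_sub hmean hgA_sum, htsum_gA, hmBdef, hκ]
    have hα : 0 < α := by
      refine lt_of_lt_of_le hk₀ (Finset.single_le_sum (fun i _ => hq i) ?_)
      exact Finset.mem_range.mpr (by omega)
    have hβ : 0 ≤ β := by
      rw [← htsum_qB]
      refine tsum_nonneg fun k => ?_
      by_cases h : k ≤ F <;> simp [hqBdef, h, hq k]
    set A' := (F : ℝ) * α - mA with hA'def
    set B' := mB - (F : ℝ) * β with hB'def
    have hA' : 0 ≤ A' := by
      have : A' = ∑ k ∈ Finset.range (F + 1), ((F : ℝ) - (k : ℝ)) * q k := by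
        rw [hA'def, hαdef, hmAdef, Finset.mul_sum, ← Finset.sum_sub_distrib]
        exact Finset.sum_congr rfl fun k _ => by ring
      rw [this]
      refine Finset.sum_nonneg fun k hk => ?_
      simp only [Finset.mem_range] at hk
      have : (k : ℝ) ≤ (F : ℝ) := by exact_mod_cast Nat.lt_succ_iff.mp hk
      exact mul_nonneg (by linarith) (hq k)
    have hBfun : ∀ k : ℕ, gB k - (F : ℝ) * qB k
        = if k ≤ F then 0 else ((k : ℝ) - (F : ℝ)) * q k := by
      intro k; by_cases h : k ≤ F <;> simp [hqBdef, hgBdef, h] <;> ring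
    have hBsum : Summable (fun k : ℕ => gB k - (F : ℝ) * qB k) :=
      hgB_sum.sub (hqB_sum.mul_left _)
    have htsumB : ∑' k, (gB k - (F : ℝ) * qB k) = B' := by
      rw [Summable.tsum_sub hgB_sum (hqB_sum.mul_left _), htsum_gB, tsum_mul_left, htsum_qB, hB'def]
    have hB'pos : 0 < B' := by
      rw [← htsumB]
      refine Summable.tsum_pos hBsum (fun k => ?_) k₁ ?_
      · rw [hBfun k]
        by_cases h : k ≤ F
        · simp [h]
        · simp only [h, if_false]
          have : (F : ℝ) ≤ (k : ℝ) := by exact_mod_cast le_of_not_ge h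
          exact mul_nonneg (by linarith) (hq k)
      · rw [hBfun k₁]
        have h : ¬ k₁ ≤ F := by omega
        simp only [h, if_false]
        have : (F : ℝ) < (k₁ : ℝ) := by exact_mod_cast hk₁F
        exact mul_pos (by linarith) hk₁
    have hB'β : β ≤ B' := by
      have hfun : ∀ k : ℕ, gB k - ((F : ℝ) + 1) * qB k
          = if k ≤ F then 0 else ((k : ℝ) - (F : ℝ) - 1) * q k := by
        intro k; by_cases h : k ≤ F <;> simp [hqBdef, hgBdef, h] <;> ring
      have hsum' : ∑' k, (gB k - ((F : ℝ) + 1) * qB k) = B' - β := by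
        rw [Summable.tsum_sub hgB_sum (hqB_sum.mul_left _), htsum_gB, tsum_mul_left, htsum_qB,
          hB'def]; ring
      have : 0 ≤ B' - β := by
        rw [← hsum']
        refine tsum_nonneg fun k => ?_
        rw [hfun k]
        by_cases h : k ≤ F
        · simp [h]
        · simp only [h, if_false]
          have : (F : ℝ) + 1 ≤ (k : ℝ) := by exact_mod_cast Nat.succ_le_of_lt (by omega)
          exact mul_nonneg (by linarith) (hq k)
      linarith
    set a := (F : ℝ) + 1 - κ with hadef
    set b := κ - (F : ℝ) with hbdef
    have ha : 0 < a := by rw [hadef]; linarith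
    have hb : 0 < b := by rw [hbdef]; linarith
    set D := α * B' + β * A' with hDdef
    have hD : 0 < D :=
      add_pos_of_pos_of_nonneg (mul_pos hα hB'pos) (mul_nonneg hβ hA')
    set u := a * B' / D with hudef
    set v := a * A' / D with hvdef
    have hu0 : 0 ≤ u := div_nonneg (mul_nonneg ha.le hB'pos.le) hD.le
    have hv0 : 0 ≤ v := div_nonneg (mul_nonneg ha.le hA') hD.le
    have key1 : D - a * B' = b * (B' - β) := by
      rw [hDdef, hadef, hbdef, hβdef, hA'def, hB'def, hmBdef]; ring
    have key2 : D - a * A' = b * (α + A') := by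
      rw [hDdef, hadef, hbdef, hβdef, hA'def, hB'def, hmBdef]; ring
    have hu1 : u ≤ 1 := by
      rw [hudef, div_le_one hD]
      linarith [key1, mul_nonneg hb.le (sub_nonneg.mpr hB'β)]
    have hv1 : v ≤ 1 := by
      rw [hvdef, div_le_one hD]
      linarith [key2, mul_nonneg hb.le (add_nonneg hα.le hA')]
    have huv1 : u * α + v * β = a := by
      rw [hudef, hvdef]
      have hDne : D ≠ 0 := ne_of_gt hD
      field_simp
      rw [hDdef]; ring
    have huv2 : u * mA + v * mB = a * (F : ℝ) := by
      rw [hudef, hvdef]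
      have hDne : D ≠ 0 := ne_of_gt hD
      field_simp
      rw [hDdef, hB'def, hA'def, hβdef, hmBdef]; ring
    refine ⟨fun k => (if k ≤ F then u else v) * q k / a,
      fun k => (if k ≤ F then 1 - u else 1 - v) * q k / b, ?_, ?_, ?_, ?_, ?_, ?_, ?_, ?_, ?_, ?_, ?_⟩
    · intro k
      by_cases h : k ≤ F <;> simp only [h, if_true, if_false] <;>
        exact div_nonneg (mul_nonneg (by assumption) (hq k)) ha.le
    · have hfun : (fun k : ℕ => (if k ≤ F then u else v) * q k / a)
          = fun k => (u / a) * qA k + (v / a) * qB k := by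
        funext k; by_cases h : k ≤ F <;> simp [hqAdef, hqBdef, h] <;> ring
      rw [hfun, Summable.tsum_add ((hqA_sum.mul_left _)) ((hqB_sum.mul_left _)),
        tsum_mul_left, tsum_mul_left, htsum_qA, htsum_qB]
      have h2 : u / a * α + v / a * β = (u * α + v * β) / a := by ring
      rw [h2, huv1, div_self ha.ne']
    · intro k
      by_cases h : k ≤ F <;> simp only [h, if_true, if_false] <;>
        exact div_nonneg (mul_nonneg (by linarith) (hq k)) hb.le
    · have hfun : (fun k : ℕ => (if k ≤ F then 1 - u else 1 - v) * q k / b)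
          = fun k => ((1 - u) / b) * qA k + ((1 - v) / b) * qB k := by
        funext k; by_cases h : k ≤ F <;> simp [hqAdef, hqBdef, h] <;> ring
      rw [hfun, Summable.tsum_add ((hqA_sum.mul_left _)) ((hqB_sum.mul_left _)),
        tsum_mul_left, tsum_mul_left, htsum_qA, htsum_qB]
      have : (1 - u) / b * α + (1 - v) / b * β = (α + β - (u * α + v * β)) / b := by ring
      rw [this, huv1, hβdef, hadef, hbdef]
      field_simp
      ring
    · intro k h hq0
      apply h
      simp [hq0]
    · intro k h hq0
      apply h
      simp [hq0]
    · have hfun : (fun k : ℕ => (k : ℝ) * ((if k ≤ F then u else v) * q k / a))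
          = fun k => (u / a) * gA k + (v / a) * gB k := by
        funext k; by_cases h : k ≤ F <;> simp [hgAdef, hgBdef, h] <;> ring
      rw [hfun]
      exact (hgA_sum.mul_left _).add (hgB_sum.mul_left _)
    · have hfun : (fun k : ℕ => (k : ℝ) * ((if k ≤ F then u else v) * q k / a))
          = fun k => (u / a) * gA k + (v / a) * gB k := by
        funext k; by_cases h : k ≤ F <;> simp [hgAdef, hgBdef, h] <;> ring
      rw [hfun, Summable.tsum_add ((hgA_sum.mul_left _)) ((hgB_sum.mul_left _)),
        tsum_mul_left, tsum_mul_left, htsum_gA, htsum_gB]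
      have h2 : u / a * mA + v / a * mB = (u * mA + v * mB) / a := by ring
      rw [h2, huv2, mul_comm, mul_div_assoc, div_self ha.ne', mul_one]
    · have hfun : (fun k : ℕ => (k : ℝ) * ((if k ≤ F then 1 - u else 1 - v) * q k / b))
          = fun k => ((1 - u) / b) * gA k + ((1 - v) / b) * gB k := by
        funext k; by_cases h : k ≤ F <;> simp [hgAdef, hgBdef, h] <;> ring
      rw [hfun]
      exact (hgA_sum.mul_left _).add (hgB_sum.mul_left _)
    · have hfun : (fun k : ℕ => (k : ℝ) * ((if k ≤ F then 1 - u else 1 - v) * q k / b))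
          = fun k => ((1 - u) / b) * gA k + ((1 - v) / b) * gB k := by
        funext k; by_cases h : k ≤ F <;> simp [hgAdef, hgBdef, h] <;> ring
      rw [hfun, Summable.tsum_add ((hgA_sum.mul_left _)) ((hgB_sum.mul_left _)),
        tsum_mul_left, tsum_mul_left, htsum_gA, htsum_gB]
      have heq : (1 - u) / b * mA + (1 - v) / b * mB
          = (mA + mB - (u * mA + v * mB)) / b := by ring
      rw [heq, huv2]
      have : mA + mB - a * (F : ℝ) = b * ((F : ℝ) + 1) := by
        rw [hmBdef, hadef, hbdef]; ring
      rw [this, mul_comm, mul_div_assoc, div_self hb.ne', mul_one]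
    · intro k
      by_cases h : k ≤ F <;> simp only [h, if_true, if_false] <;>
        field_simp <;> ring
end

section
/- Fix L ≥ 1, probabilities p_1,…,p_L and a mean μ > 0 with κ ≥ L+1, and let H = H(μ,p_L). Then for every F ∈ F(μ,p_L) and every s ∈ [0,1], g_F(s) ≥ g_H(s). -/
open scoped BigOperators

private lemma chord_hi (s : ℝ) (h0 : 0 ≤ s) (h1 : s ≤ 1) (k m : ℕ) :
    s ^ k + (s ^ (k + 1) - s ^ k) * (m : ℝ) ≤ s ^ (k + m) := by
  induction m with
  | zero => simp
  | succ n ih =>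
    have h2 : s ^ (k + n) ≤ s ^ k := pow_le_pow_of_le_one h0 h1 (Nat.le_add_right _ _)
    have h3 : s ^ (k + (n + 1)) = s ^ (k + n) * s := by
      rw [← pow_succ]
      ring_nf
    have h4 : s ^ (k + 1) = s ^ k * s := pow_succ s k
    push_cast
    push_cast at ih
    nlinarith [mul_nonneg (sub_nonneg.2 h1) (sub_nonneg.2 h2)]

private lemma chord_lo (s : ℝ) (h0 : 0 ≤ s) (h1 : s ≤ 1) (k : ℕ) :
    ∀ m, m ≤ k → s ^ k + (s ^ (k + 1) - s ^ k) * (-(m : ℝ)) ≤ s ^ (k - m) := by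
  intro m
  induction m with
  | zero => intro _; simp
  | succ n ih =>
    intro h
    have hn : n ≤ k := Nat.le_of_succ_le h
    have ih' := ih hn
    have hkn : k - n = (k - (n + 1)) + 1 := by omega
    have h2 : s ^ (k - (n + 1)) * s = s ^ (k - n) := by rw [hkn, pow_succ]
    have h3 : s ^ k ≤ s ^ (k - (n + 1)) := pow_le_pow_of_le_one h0 h1 (by omega)
    have h4 : s ^ (k + 1) = s ^ k * s := pow_succ s k
    push_cast at ih' ⊢
    nlinarith [mul_nonneg (sub_nonneg.2 h1) (sub_nonneg.2 h3)]

private lemma chord (s : ℝ) (h0 : 0 ≤ s) (h1 : s ≤ 1) (k d : ℕ) :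
    s ^ k + (s ^ (k + 1) - s ^ k) * ((d : ℝ) - (k : ℝ)) ≤ s ^ d := by
  rcases le_total k d with h | h
  · have hc := chord_hi s h0 h1 k (d - k)
    rw [Nat.cast_sub h, Nat.add_sub_cancel' h] at hc
    exact hc
  · have hc := chord_lo s h0 h1 k (k - d) (Nat.sub_le _ _)
    rw [Nat.cast_sub h, Nat.sub_sub_self h] at hc
    have he : (d : ℝ) - (k : ℝ) = -((k : ℝ) - (d : ℝ)) := by ring
    rw [he]
    exact hc

private lemma pgf_summable (G : DegreeDist) {s : ℝ} (h0 : 0 ≤ s) (h1 : s ≤ 1) :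
    Summable fun d : ℕ => G.p d * s ^ d := by
  refine Summable.of_nonneg_of_le
    (fun d => mul_nonneg (G.nonneg d) (pow_nonneg h0 d)) (fun d => ?_) G.psummable
  have hle : s ^ d ≤ 1 := pow_le_one₀ h0 h1
  nlinarith [G.nonneg d]

private lemma lin_summable (G : DegreeDist) (a b : ℝ) :
    Summable fun d : ℕ => G.p d * (a * (d : ℝ) + b) := by
  have hfun : (fun d : ℕ => G.p d * (a * (d : ℝ) + b))
      = fun d : ℕ => a * ((d : ℝ) * G.p d) + b * G.p d := by funext d; ring
  rw [hfun]
  exact (G.mean_summable.mul_left a).add (G.psummable.mul_left b)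

private lemma lin_tsum (G : DegreeDist) (a b : ℝ) :
    ∑' d : ℕ, G.p d * (a * (d : ℝ) + b) = a * mu G + b := by
  have hfun : (fun d : ℕ => G.p d * (a * (d : ℝ) + b))
      = fun d : ℕ => a * ((d : ℝ) * G.p d) + b * G.p d := by funext d; ring
  rw [hfun, Summable.tsum_add (G.mean_summable.mul_left a) (G.psummable.mul_left b),
    tsum_mul_left, tsum_mul_left, G.sum_one, mul_one]
  rfl

/-- If `κ ≥ L+1`, then for every `F ∈ F(μ, p_L)` and every `s ∈ [0,1]`,
`g_F(s) ≥ g_H(s)`. -/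
theorem tail_does_not_determine_giant_stmt12
    (L : ℕ) (hL : 1 ≤ L) (p : ℕ → ℝ)
    (hp : ∀ i, 0 ≤ p i) (hplt : ∑ i ∈ Finset.Icc 1 L, p i < 1)
    (μ : ℝ) (hμ : 0 < μ) (hκ : (L : ℝ) + 1 ≤ kappa L p μ)
    (H : DegreeDist) (hH : IsH L p μ H)
    (F : DegreeDist) (hF : MemF L p F) (hFmu : mu F = μ)
    (s : ℝ) (hs : s ∈ Set.Icc (0 : ℝ) 1) :
    pgf H s ≤ pgf F s := by
  obtain ⟨hs0, hs1⟩ := hs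
  obtain ⟨hH1, hH2, hH3, hH4⟩ := hH
  set κv := kappa L p μ with hκv
  set k := ⌊κv⌋₊ with hk
  set q := pGt L p with hqdef
  have hq : 0 < q := by
    simp only [hqdef, pGt]; linarith
  have hkL : L + 1 ≤ k := by
    apply Nat.le_floor
    push_cast
    exact hκ
  have hκq : κv * q = μ - ∑ d ∈ Finset.Icc 1 L, (d : ℝ) * p d := by
    have hrfl : κv = (μ - ∑ d ∈ Finset.Icc 1 L, (d : ℝ) * p d) / q := rfl
    rw [hrfl, div_mul_cancel₀ _ (ne_of_gt hq)]
  -- mean of H is μ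
  have hdisj : Disjoint (Finset.Icc 1 L) ({k, k + 1} : Finset ℕ) := by
    rw [Finset.disjoint_left]
    intro d hd hd2
    simp only [Finset.mem_Icc] at hd
    simp only [Finset.mem_insert, Finset.mem_singleton] at hd2
    omega
  have hmuH : mu H = μ := by
    have hzero : ∀ d ∉ (Finset.Icc 1 L ∪ {k, k + 1} : Finset ℕ), (d : ℝ) * H.p d = 0 := by
      intro d hd
      simp only [Finset.mem_union, Finset.mem_Icc, Finset.mem_insert,
        Finset.mem_singleton, not_or, not_and] at hd
      obtain ⟨hd1, hd2, hd3⟩ := hd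
      rcases Nat.eq_zero_or_pos d with h0 | h0
      · simp [h0]
      · have hdL : L < d := by
          have := hd1 h0
          omega
        rw [hH4 d hdL hd2 hd3, mul_zero]
    rw [mu, tsum_eq_sum hzero, Finset.sum_union hdisj,
      Finset.sum_pair (by omega : k ≠ k + 1), hH2, hH3]
    have hrw : ∑ d ∈ Finset.Icc 1 L, (d : ℝ) * H.p d
        = ∑ d ∈ Finset.Icc 1 L, (d : ℝ) * p d := by
      refine Finset.sum_congr rfl fun d hd => ?_
      simp only [Finset.mem_Icc] at hd
      rw [hH1 d hd.1 hd.2]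
    rw [hrw]
    push_cast
    linear_combination hκq
  -- the chord line
  set A : ℝ := s ^ (k + 1) - s ^ k with hA
  set B : ℝ := s ^ k - A * (k : ℝ) with hB
  have hchord : ∀ d : ℕ, A * (d : ℝ) + B ≤ s ^ d := by
    intro d
    have hc := chord s hs0 hs1 k d
    calc A * (d : ℝ) + B = s ^ k + (s ^ (k + 1) - s ^ k) * ((d : ℝ) - (k : ℝ)) := by
          rw [hB, hA]; ring
      _ ≤ s ^ d := hc
  have hFs := pgf_summable F hs0 hs1
  have hHs := pgf_summable H hs0 hs1
  have hFl := lin_summable F A B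
  have hHl := lin_summable H A B
  have key : pgf F s - pgf H s
      = ∑' d : ℕ, ((F.p d - H.p d) * (s ^ d - (A * (d : ℝ) + B))) := by
    have hfun : (fun d : ℕ => (F.p d - H.p d) * (s ^ d - (A * (d : ℝ) + B)))
        = fun d : ℕ => (F.p d * s ^ d - F.p d * (A * (d : ℝ) + B))
            - (H.p d * s ^ d - H.p d * (A * (d : ℝ) + B)) := by
      funext d; ring
    rw [hfun, Summable.tsum_sub (hFs.sub hFl) (hHs.sub hHl), Summable.tsum_sub hFs hFl, Summable.tsum_sub hHs hHl,
      lin_tsum, lin_tsum, hFmu, hmuH, pgf, pgf]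
    ring
  have hpt : ∀ d : ℕ, 0 ≤ (F.p d - H.p d) * (s ^ d - (A * (d : ℝ) + B)) := by
    intro d
    rcases Nat.eq_zero_or_pos d with h0 | h0
    · subst h0; simp [F.zero, H.zero]
    by_cases hdL : d ≤ L
    · rw [hF d h0 hdL, hH1 d h0 hdL]; simp
    by_cases hdk : d = k
    · have hz : s ^ d - (A * (d : ℝ) + B) = 0 := by rw [hdk, hB]; ring
      rw [hz, mul_zero]
    by_cases hdk1 : d = k + 1
    · have hz : s ^ d - (A * (d : ℝ) + B) = 0 := by
        rw [hdk1, hB, hA]; push_cast; ring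
      rw [hz, mul_zero]
    · have hH0 : H.p d = 0 := hH4 d (by omega) hdk hdk1
      rw [hH0, sub_zero]
      exact mul_nonneg (F.nonneg d) (sub_nonneg.2 (hchord d))
  have hnn : 0 ≤ ∑' d : ℕ, ((F.p d - H.p d) * (s ^ d - (A * (d : ℝ) + B))) :=
    tsum_nonneg hpt
  linarith [key, hnn]
end

section
/- Let N be a random variable taking values in the nonnegative integers with finite mean κ. Then for every s ∈ [0,1], E[s^N] ≥ (⌊κ⌋+1−κ)·s^{⌊κ⌋} + (κ−⌊κ⌋)·s^{⌊κ⌋+1}. -/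
open scoped BigOperators

lemma pow_diff_mono (s : ℝ) (h0 : 0 ≤ s) (h1 : s ≤ 1) {a b : ℕ} (hab : a ≤ b) :
    s ^ b - s ^ (b + 1) ≤ s ^ a - s ^ (a + 1) := by
  have h2 : s ^ b * (1 - s) ≤ s ^ a * (1 - s) :=
    mul_le_mul_of_nonneg_right (pow_le_pow_of_le_one h0 h1 hab) (by linarith)
  rw [mul_sub, mul_sub, mul_one, mul_one, ← pow_succ, ← pow_succ] at h2
  exact h2

lemma pow_line_le (s : ℝ) (h0 : 0 ≤ s) (h1 : s ≤ 1) (n k : ℕ) :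
    s ^ n + ((k : ℝ) - n) * (s ^ (n + 1) - s ^ n) ≤ s ^ k := by
  rcases le_total n k with h | h
  · obtain ⟨m, rfl⟩ := Nat.exists_eq_add_of_le h
    induction m with
    | zero => simp
    | succ m ih =>
      have h2 := pow_diff_mono s h0 h1 (Nat.le_add_right n m)
      have h3 := ih (by omega)
      have e : n + (m + 1) = (n + m) + 1 := by omega
      rw [e]
      push_cast at h3 ⊢
      linarith
  · obtain ⟨m, rfl⟩ := Nat.exists_eq_add_of_le h
    clear h
    induction m with
    | zero => simp
    | succ m ih =>
      have h2 := pow_diff_mono s h0 h1 (Nat.le_add_right k m)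
      have h2' := pow_diff_mono s h0 h1 (Nat.le_add_right (k + m) 1)
      have e : k + (m + 1) = (k + m) + 1 := by omega
      rw [e]
      push_cast at ih ⊢
      nlinarith [ih, h2, h2']

/-- For a distribution `q` on `ℕ` with mean `κ` and `s ∈ [0,1]`,
`E[s^N] ≥ (⌊κ⌋+1-κ) s^{⌊κ⌋} + (κ-⌊κ⌋) s^{⌊κ⌋+1}`. -/
theorem tail_does_not_determine_giant_stmt13
    (q : ℕ → ℝ) (hq : ∀ k, 0 ≤ q k) (hsum : ∑' k : ℕ, q k = 1)
    (hmean : Summable fun k : ℕ => (k : ℝ) * q k)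
    (κ : ℝ) (hκ : κ = ∑' k : ℕ, (k : ℝ) * q k)
    (s : ℝ) (hs : s ∈ Set.Icc (0 : ℝ) 1) :
    ((⌊κ⌋₊ : ℝ) + 1 - κ) * s ^ ⌊κ⌋₊ + (κ - (⌊κ⌋₊ : ℝ)) * s ^ (⌊κ⌋₊ + 1) ≤
      ∑' k : ℕ, q k * s ^ k := by
  obtain ⟨h0, h1⟩ := hs
  set n := ⌊κ⌋₊ with hn
  have hmean1 : Summable (fun k : ℕ => ((k + 1 : ℕ) : ℝ) * q (k + 1)) :=
    (summable_nat_add_iff 1).mpr hmean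
  have hq1 : Summable (fun k : ℕ => q (k + 1)) := by
    apply Summable.of_nonneg_of_le (fun k => hq _) _ hmean1
    intro k
    have : (1 : ℝ) ≤ ((k + 1 : ℕ) : ℝ) := by exact_mod_cast Nat.one_le_iff_ne_zero.mpr (by omega)
    nlinarith [hq (k + 1)]
  have hsq : Summable q := (summable_nat_add_iff 1).mp hq1
  set B : ℝ := s ^ (n + 1) - s ^ n with hB
  have hlsum : Summable (fun k : ℕ => q k * (s ^ n + ((k : ℝ) - n) * B)) := by
    have : (fun k : ℕ => q k * (s ^ n + ((k : ℝ) - n) * B)) =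
        fun k : ℕ => (s ^ n - (n : ℝ) * B) * q k + B * ((k : ℝ) * q k) := by
      funext k; ring
    rw [this]
    exact (hsq.mul_left _).add (hmean.mul_left B)
  have hrsum : Summable (fun k : ℕ => q k * s ^ k) := by
    apply Summable.of_nonneg_of_le (fun k => mul_nonneg (hq k) (pow_nonneg h0 k)) _ hsq
    intro k
    nlinarith [hq k, pow_le_one₀ h0 h1 (n := k)]
  have hle : ∑' k : ℕ, q k * (s ^ n + ((k : ℝ) - n) * B) ≤ ∑' k : ℕ, q k * s ^ k := by
    apply Summable.tsum_le_tsum _ hlsum hrsum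
    intro k
    exact mul_le_mul_of_nonneg_left (pow_line_le s h0 h1 n k) (hq k)
  have hcalc : ∑' k : ℕ, q k * (s ^ n + ((k : ℝ) - n) * B) =
      (s ^ n - (n : ℝ) * B) + B * κ := by
    have e : (fun k : ℕ => q k * (s ^ n + ((k : ℝ) - n) * B)) =
        fun k : ℕ => (s ^ n - (n : ℝ) * B) * q k + B * ((k : ℝ) * q k) := by
      funext k; ring
    rw [e, Summable.tsum_add (hsq.mul_left _) (hmean.mul_left B), tsum_mul_left, tsum_mul_left,
      hsum, hκ, mul_one]
  have : ((n : ℝ) + 1 - κ) * s ^ n + (κ - (n : ℝ)) * s ^ (n + 1) =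
      (s ^ n - (n : ℝ) * B) + B * κ := by rw [hB]; ring
  linarith [hle, hcalc.ge]
end
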